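/- arXiv:2108.07193 — 12 statements merged into one kernel-verified Lean document; each statement's English description precedes it below -/
import Mathlib

section
/- Let z₁,…,z_k ∈ ℝⁿ and let x, y ∈ ℝⁿ satisfy ‖x − zᵢ‖ ≤ ‖y − zᵢ‖ for every i = 1,…,k. Then ‖x − z‖ ≤ ‖y − z‖ for every z in the convex hull of {z₁,…,z_k}. In particular, if y itself belongs to the convex hull of {z₁,…,z_k}, then x = y. -/
/-- Let `z₁, …, z_k ∈ ℝⁿ` and `x, y ∈ ℝⁿ` satisfy `‖x − zᵢ‖ ≤ ‖y − zᵢ‖`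
for every `i`. Then `‖x − z‖ ≤ ‖y − z‖` for every `z` in the convex hull of
`{z₁, …, z_k}`; in particular, if `y` belongs to this convex hull, then `x = y`. -/
theorem stmt_0 {n k : ℕ} (z : Fin k → EuclideanSpace ℝ (Fin n))
    (x y : EuclideanSpace ℝ (Fin n))
    (h : ∀ i, ‖x - z i‖ ≤ ‖y - z i‖) :
    (∀ w ∈ convexHull ℝ (Set.range z), ‖x - w‖ ≤ ‖y - w‖) ∧
      (y ∈ convexHull ℝ (Set.range z) → x = y) := by
  have key : ∀ w : EuclideanSpace ℝ (Fin n),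
      (‖x - w‖ ≤ ‖y - w‖ ↔ inner ℝ (y - x) w ≤ (‖y‖ ^ 2 - ‖x‖ ^ 2) / 2) := by
    intro w
    rw [← Real.sqrt_sq (norm_nonneg (x - w)), ← Real.sqrt_sq (norm_nonneg (y - w)),
      Real.sqrt_le_sqrt_iff (by positivity)]
    have hx : ‖x - w‖ ^ 2 = ‖x‖ ^ 2 - 2 * inner ℝ x w + ‖w‖ ^ 2 := norm_sub_sq_real x w
    have hy : ‖y - w‖ ^ 2 = ‖y‖ ^ 2 - 2 * inner ℝ y w + ‖w‖ ^ 2 := norm_sub_sq_real y w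
    rw [hx, hy, inner_sub_left]
    constructor <;> intro hle <;> linarith
  have hsub : convexHull ℝ (Set.range z) ⊆
      {w : EuclideanSpace ℝ (Fin n) | inner ℝ (y - x) w ≤ (‖y‖ ^ 2 - ‖x‖ ^ 2) / 2} := by
    apply convexHull_min
    · rintro w ⟨i, rfl⟩
      exact (key (z i)).mp (h i)
    · exact convex_halfSpace_le
        ⟨fun a b => inner_add_right _ _ _, fun c a => real_inner_smul_right _ _ _⟩ _
  have main : ∀ w ∈ convexHull ℝ (Set.range z), ‖x - w‖ ≤ ‖y - w‖ :=
    fun w hw => (key w).mpr (hsub hw)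
  refine ⟨main, fun hy => ?_⟩
  have := main y hy
  simp at this
  rw [sub_eq_zero] at this
  exact this
end

section
/- Let S ⊆ ℝⁿ be an arbitrary subset and let u : S → ℝᵐ be an isometry, i.e. ‖u(x) − u(y)‖ = ‖x − y‖ for all x, y ∈ S. Then there exists a unique 1-Lipschitz map ũ : Conv(S) → ℝᵐ with ũ|_S = u; moreover ũ is an isometry (and is affine). -/
open Finset RealInnerProductSpace

variable {F : Type*} [NormedAddCommGroup F] [InnerProductSpace ℝ F]

private lemma polar4 (a b c d : F) :
    ⟪a - b, c - d⟫ = (‖a - d‖^2 + ‖b - c‖^2 - ‖a - c‖^2 - ‖b - d‖^2) / 2 := by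
  simp only [norm_sub_sq_real, inner_sub_left, inner_sub_right]
  ring

private lemma double_sum {ι κ : Type*} [Fintype ι] [Fintype κ] {V : Type*} [AddCommGroup V]
    [Module ℝ V] (w : ι → ℝ) (r : κ → ℝ) (hw : ∑ i, w i = 1) (hr : ∑ j, r j = 1)
    (f : ι → V) (g : κ → V) :
    (∑ i, w i • f i) - ∑ j, r j • g j = ∑ i, ∑ j, (w i * r j) • (f i - g j) := by
  have h1 : ∀ i, ∑ j, (w i * r j) • (f i - g j)
      = w i • f i - ∑ j, (w i * r j) • g j := by
    intro i
    simp only [smul_sub]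
    rw [Finset.sum_sub_distrib]
    congr 1
    rw [← Finset.sum_smul, ← Finset.mul_sum, hr, mul_one]
  simp only [h1]
  rw [Finset.sum_sub_distrib]
  congr 1
  rw [Finset.sum_comm]
  refine Finset.sum_congr rfl fun j _ => ?_
  rw [← Finset.sum_smul, ← Finset.sum_mul, hw, one_mul]

private lemma variance_id {ι : Type*} [Fintype ι] (w : ι → ℝ) (hw : ∑ i, w i = 1)
    (q : ι → F) (p : F) :
    ∑ i, w i * ‖p - q i‖^2
      = ‖p - ∑ i, w i • q i‖^2 + ∑ i, w i * ‖(∑ i, w i • q i) - q i‖^2 := by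
  set e := ∑ i, w i • q i with he
  have h1 : ∀ p' : F, ∑ i, w i * ‖p' - q i‖^2
      = ‖p'‖^2 - 2 * ⟪p', e⟫ + ∑ i, w i * ‖q i‖^2 := by
    intro p'
    have h2 : ⟪p', e⟫ = ∑ i, w i * ⟪p', q i⟫ := by
      simp [he, inner_sum, real_inner_smul_right]
    calc ∑ i, w i * ‖p' - q i‖^2
        = ∑ i, (w i * ‖p'‖^2 - 2 * (w i * ⟪p', q i⟫) + w i * ‖q i‖^2) := by
          refine Finset.sum_congr rfl fun i _ => ?_
          rw [norm_sub_sq_real]; ring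
      _ = ‖p'‖^2 - 2 * ⟪p', e⟫ + ∑ i, w i * ‖q i‖^2 := by
          rw [Finset.sum_add_distrib, Finset.sum_sub_distrib, ← Finset.sum_mul, hw,
            ← Finset.mul_sum, h2]; ring
  have h3 : ⟪e, e⟫ = ‖e‖^2 := real_inner_self_eq_norm_sq e
  rw [h1, h1, norm_sub_sq_real]
  linarith

private lemma key_norm {E : Type*} [NormedAddCommGroup E] [InnerProductSpace ℝ E]
    {ι κ : Type*} [Fintype ι] [Fintype κ] (w : ι → ℝ) (r : κ → ℝ)
    (hw : ∑ i, w i = 1) (hr : ∑ j, r j = 1) (f : ι → E) (g : κ → E)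
    (f' : ι → F) (g' : κ → F)
    (hinner : ∀ i j k l, ⟪f' i - g' j, f' k - g' l⟫ = ⟪f i - g j, f k - g l⟫) :
    ‖(∑ i, w i • f' i) - ∑ j, r j • g' j‖ = ‖(∑ i, w i • f i) - ∑ j, r j • g j‖ := by
  have hsq : ‖(∑ i, w i • f' i) - ∑ j, r j • g' j‖^2
      = ‖(∑ i, w i • f i) - ∑ j, r j • g j‖^2 := by
    rw [← real_inner_self_eq_norm_sq, ← real_inner_self_eq_norm_sq,
      double_sum w r hw hr, double_sum w r hw hr]
    simp only [sum_inner, inner_sum, real_inner_smul_left, real_inner_smul_right]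
    exact Finset.sum_congr rfl fun i _ => Finset.sum_congr rfl fun j _ =>
      Finset.sum_congr rfl fun k _ => Finset.sum_congr rfl fun l _ => by rw [hinner]
  rw [← Real.sqrt_sq (norm_nonneg ((∑ i, w i • f' i) - ∑ j, r j • g' j)), hsq,
    Real.sqrt_sq (norm_nonneg _)]

private def IsRep {n m : ℕ} (S : Set (EuclideanSpace ℝ (Fin n)))
    (u : EuclideanSpace ℝ (Fin n) → EuclideanSpace ℝ (Fin m))
    (x : EuclideanSpace ℝ (Fin n)) (p : EuclideanSpace ℝ (Fin m)) : Prop :=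
  ∃ (ι : Type) (_ : Fintype ι) (w : ι → ℝ) (z : ι → EuclideanSpace ℝ (Fin n)),
    (∀ i, 0 ≤ w i) ∧ (∑ i, w i = 1) ∧ (∀ i, z i ∈ S) ∧
    (∑ i, w i • z i = x) ∧ (∑ i, w i • u (z i) = p)

private lemma isRep_key {n m : ℕ} {S : Set (EuclideanSpace ℝ (Fin n))}
    {u : EuclideanSpace ℝ (Fin n) → EuclideanSpace ℝ (Fin m)}
    (hu : ∀ x ∈ S, ∀ y ∈ S, ‖u x - u y‖ = ‖x - y‖)
    {x y : EuclideanSpace ℝ (Fin n)} {p q : EuclideanSpace ℝ (Fin m)}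
    (hp : IsRep S u x p) (hq : IsRep S u y q) : ‖p - q‖ = ‖x - y‖ := by
  have hU : ∀ a ∈ S, ∀ b ∈ S, ∀ c ∈ S, ∀ d ∈ S,
      (⟪u a - u b, u c - u d⟫ : ℝ) = ⟪a - b, c - d⟫ := by
    intro a ha b hb c hc d hd
    rw [polar4, polar4, hu a ha d hd, hu b hb c hc, hu a ha c hc, hu b hb d hd]
  obtain ⟨ι, _, w, z, h0, h1, hz, hx, hp⟩ := hp
  obtain ⟨κ, _, r, g, k0, k1, kz, hy, hq⟩ := hq
  subst hx hy hp hq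
  exact key_norm w r h1 k1 z g (fun i => u (z i)) (fun j => u (g j))
    (fun i j k l => hU (z i) (hz i) (g j) (kz j) (z k) (hz k) (g l) (kz l))

private lemma isRep_self {n m : ℕ} {S : Set (EuclideanSpace ℝ (Fin n))}
    {u : EuclideanSpace ℝ (Fin n) → EuclideanSpace ℝ (Fin m)}
    {s : EuclideanSpace ℝ (Fin n)} (hs : s ∈ S) : IsRep S u s (u s) :=
  ⟨PUnit, inferInstance, fun _ => 1, fun _ => s, fun _ => zero_le_one, by simp,
    fun _ => hs, by simp, by simp⟩

private lemma isRep_combo {n m : ℕ} {S : Set (EuclideanSpace ℝ (Fin n))}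
    {u : EuclideanSpace ℝ (Fin n) → EuclideanSpace ℝ (Fin m)}
    {a b : EuclideanSpace ℝ (Fin n)} {p q : EuclideanSpace ℝ (Fin m)}
    (hp : IsRep S u a p) (hq : IsRep S u b q) (t : ℝ) (ht0 : 0 ≤ t) (ht1 : t ≤ 1) :
    IsRep S u (t • a + (1 - t) • b) (t • p + (1 - t) • q) := by
  obtain ⟨ι, _, w, z, h0, h1, hz, hx, hpp⟩ := hp
  obtain ⟨κ, _, r, g, k0, k1, kz, hy, hqq⟩ := hq
  refine ⟨ι ⊕ κ, inferInstance, Sum.elim (fun i => t * w i) (fun j => (1 - t) * r j),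
    Sum.elim z g, ?_, ?_, ?_, ?_, ?_⟩
  · rintro (i | j)
    · exact mul_nonneg ht0 (h0 i)
    · exact mul_nonneg (by linarith) (k0 j)
  · rw [Fintype.sum_sum_type]
    simp only [Sum.elim_inl, Sum.elim_inr, ← Finset.mul_sum]
    rw [h1, k1]; ring
  · rintro (i | j)
    · exact hz i
    · exact kz j
  · rw [Fintype.sum_sum_type]
    simp only [Sum.elim_inl, Sum.elim_inr, mul_smul]
    rw [← Finset.smul_sum, ← Finset.smul_sum, hx, hy]
  · rw [Fintype.sum_sum_type]
    simp only [Sum.elim_inl, Sum.elim_inr, mul_smul]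
    rw [← Finset.smul_sum, ← Finset.smul_sum, hpp, hqq]

/-- Let `S ⊆ ℝⁿ` and let `u` be an isometry on `S` with values in `ℝᵐ`.
Then there is a unique `1`-Lipschitz map `ũ : Conv(S) → ℝᵐ` extending `u`; moreover `ũ`
is an isometry on `Conv(S)` (and is affine). -/
theorem stmt_1 {n m : ℕ} (S : Set (EuclideanSpace ℝ (Fin n)))
    (u : EuclideanSpace ℝ (Fin n) → EuclideanSpace ℝ (Fin m))
    (hu : ∀ x ∈ S, ∀ y ∈ S, ‖u x - u y‖ = ‖x - y‖) :
    ∃ v : EuclideanSpace ℝ (Fin n) → EuclideanSpace ℝ (Fin m),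
      (∀ x ∈ S, v x = u x) ∧
      LipschitzOnWith 1 v (convexHull ℝ S) ∧
      (∀ x ∈ convexHull ℝ S, ∀ y ∈ convexHull ℝ S, ‖v x - v y‖ = ‖x - y‖) ∧
      (∀ a ∈ convexHull ℝ S, ∀ b ∈ convexHull ℝ S, ∀ t : ℝ, 0 ≤ t → t ≤ 1 →
        v (t • a + (1 - t) • b) = t • v a + (1 - t) • v b) ∧
      (∀ v' : EuclideanSpace ℝ (Fin n) → EuclideanSpace ℝ (Fin m),
        (∀ x ∈ S, v' x = u x) → LipschitzOnWith 1 v' (convexHull ℝ S) →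
        ∀ x ∈ convexHull ℝ S, v' x = v x) := by
  classical
  have hex : ∀ x ∈ convexHull ℝ S, ∃ p, IsRep S u x p := by
    intro x hx
    obtain ⟨ι, _, w, z, h0, h1, hz, hx'⟩ := mem_convexHull_iff_exists_fintype.mp hx
    exact ⟨∑ i, w i • u (z i), ι, ‹_›, w, z, h0, h1, hz, hx', rfl⟩
  set v : EuclideanSpace ℝ (Fin n) → EuclideanSpace ℝ (Fin m) :=
    fun x => if h : x ∈ convexHull ℝ S then (hex x h).choose else 0 with hvdef
  have hv : ∀ x, ∀ hx : x ∈ convexHull ℝ S, IsRep S u x (v x) := by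
    intro x hx
    simp only [hvdef, dif_pos hx]
    exact (hex x hx).choose_spec
  have hiso : ∀ x ∈ convexHull ℝ S, ∀ y ∈ convexHull ℝ S, ‖v x - v y‖ = ‖x - y‖ :=
    fun x hx y hy => isRep_key hu (hv x hx) (hv y hy)
  have hext : ∀ s ∈ S, v s = u s := by
    intro s hs
    have h := isRep_key hu (hv s (subset_convexHull ℝ S hs)) (isRep_self hs)
    rw [sub_self, norm_zero] at h
    exact sub_eq_zero.mp (norm_eq_zero.mp h)
  refine ⟨v, hext, ?_, hiso, ?_, ?_⟩
  · refine LipschitzOnWith.of_dist_le_mul fun x hx y hy => ?_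
    rw [dist_eq_norm, dist_eq_norm, hiso x hx y hy]
    simp
  · intro a ha b hb t ht0 ht1
    have hc : t • a + (1 - t) • b ∈ convexHull ℝ S :=
      (convex_convexHull ℝ S) ha hb ht0 (by linarith) (by ring)
    have h2 : IsRep S u (t • a + (1 - t) • b) (t • v a + (1 - t) • v b) :=
      isRep_combo (hv a ha) (hv b hb) t ht0 ht1
    have h3 := isRep_key hu (hv _ hc) h2
    rw [sub_self, norm_zero] at h3
    exact sub_eq_zero.mp (norm_eq_zero.mp h3)
  · intro v' hext' hlip' x hx
    obtain ⟨ι, _, w, z, h0, h1, hz, hxx, hp⟩ := hv x hx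
    have hle : ∀ i, ‖v' x - u (z i)‖ ≤ ‖x - z i‖ := by
      intro i
      have hzi : z i ∈ convexHull ℝ S := subset_convexHull ℝ S (hz i)
      have h4 := hlip'.dist_le_mul x hx (z i) hzi
      rw [dist_eq_norm, dist_eq_norm, hext' (z i) (hz i)] at h4
      simpa using h4
    have hvar := variance_id w h1 (fun i => u (z i)) (v' x)
    rw [hp] at hvar
    have hterm : ∀ i, ‖v x - u (z i)‖ = ‖x - z i‖ :=
      fun i => isRep_key hu (hv x hx) (isRep_self (hz i))
    have hsum : ∑ i, w i * ‖v' x - u (z i)‖^2 ≤ ∑ i, w i * ‖x - z i‖^2 :=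
      Finset.sum_le_sum fun i _ =>
        mul_le_mul_of_nonneg_left (pow_le_pow_left₀ (norm_nonneg _) (hle i) 2) (h0 i)
    have hsum2 : ∑ i, w i * ‖v x - u (z i)‖^2 = ∑ i, w i * ‖x - z i‖^2 :=
      Finset.sum_congr rfl fun i _ => by rw [hterm i]
    have h5 : ‖v' x - v x‖^2 ≤ 0 := by linarith
    have h6 : ‖v' x - v x‖^2 = 0 := le_antisymm h5 (sq_nonneg _)
    have h7 : ‖v' x - v x‖ = 0 := by
      have := pow_eq_zero_iff (n := 2) (by norm_num) |>.mp h6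
      exact this
    exact sub_eq_zero.mp (norm_eq_zero.mp h7)
end

section
/- Let u : ℝⁿ → ℝᵐ be 1-Lipschitz. Then every leaf S of u is a closed convex subset of ℝⁿ, and the restriction u|_S is an affine isometry, i.e. there exist a linear isometry T on the span of S − S and a point such that u(x) − u(y) = T(x − y) for all x, y ∈ S. -/
open scoped RealInnerProductSpace

set_option maxHeartbeats 1000000

/-- A set `S ⊆ ℝⁿ` is a *leaf* of `u : ℝⁿ → ℝᵐ` if `u` restricted to `S` is an isometry
and `S` is maximal with this property. -/
def IsLeaf {n m : ℕ} (u : EuclideanSpace ℝ (Fin n) → EuclideanSpace ℝ (Fin m))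
    (S : Set (EuclideanSpace ℝ (Fin n))) : Prop :=
  (∀ x ∈ S, ∀ y ∈ S, ‖u x - u y‖ = ‖x - y‖) ∧
  ∀ y ∉ S, ∃ x ∈ S, ‖u y - u x‖ < ‖y - x‖

/-- Every leaf `S` of a `1`-Lipschitz map `u : ℝⁿ → ℝᵐ` is closed and
convex, and `u` restricted to `S` is an affine isometry: there is a linear map `T`,
isometric on the tangent space `V = Aff(S) − Aff(S)` of `S` (the vector span of `S`),
with `u x − u y = T (x − y)` for all `x, y ∈ S`. -/
theorem stmt_2 {n m : ℕ} (u : EuclideanSpace ℝ (Fin n) → EuclideanSpace ℝ (Fin m))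
    (hu : LipschitzWith 1 u) (S : Set (EuclideanSpace ℝ (Fin n))) (hS : IsLeaf u S) :
    IsClosed S ∧ Convex ℝ S ∧
      ∃ T : EuclideanSpace ℝ (Fin n) →ₗ[ℝ] EuclideanSpace ℝ (Fin m),
        (∀ v ∈ vectorSpan ℝ S, ‖T v‖ = ‖v‖) ∧
        ∀ x ∈ S, ∀ y ∈ S, u x - u y = T (x - y) := by
  classical
  have hle : ∀ a b, ‖u a - u b‖ ≤ ‖a - b‖ := by
    intro a b
    have := hu.dist_le_mul a b
    simpa [dist_eq_norm] using this
  obtain ⟨p, hp⟩ : ∃ p, p ∈ S := by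
    by_contra h
    push_neg at h
    obtain ⟨x, hx, -⟩ := hS.2 0 (h 0)
    exact h x hx
  have hmem : ∀ y, y ∈ S ↔ ∀ x ∈ S, ‖u y - u x‖ = ‖y - x‖ := by
    intro y
    constructor
    · intro hy x hx; exact hS.1 y hy x hx
    · intro h
      by_contra hy
      obtain ⟨x, hx, hlt⟩ := hS.2 y hy
      exact hlt.ne (h x hx)
  have hinner : ∀ x ∈ S, ∀ y ∈ S, ∀ z ∈ S,
      ⟪u x - u z, u y - u z⟫ = ⟪x - z, y - z⟫ := by
    intro x hx y hy z hz
    have h1 : ‖(u x - u z) - (u y - u z)‖ = ‖(x - z) - (y - z)‖ := by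
      have hxy := hS.1 x hx y hy
      have e1 : (u x - u z) - (u y - u z) = u x - u y := by abel
      have e2 : (x - z) - (y - z) = x - y := by abel
      rw [e1, e2, hxy]
    have h2 := hS.1 x hx z hz
    have h3 := hS.1 y hy z hz
    have e1 := norm_sub_sq_real (u x - u z) (u y - u z)
    have e2 := norm_sub_sq_real (x - z) (y - z)
    rw [h1, h2, h3] at e1
    linarith
  -- Closedness
  have hSc : IsClosed S := by
    have hrepr : S = ⋂ x ∈ S, {y | ‖u y - u x‖ = ‖y - x‖} := by
      ext y
      simp only [Set.mem_iInter, Set.mem_setOf_eq]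
      exact hmem y
    rw [hrepr]
    refine isClosed_biInter fun x hx => isClosed_eq ?_ ?_
    · exact (hu.continuous.sub continuous_const).norm
    · exact (continuous_id.sub continuous_const).norm
  -- Convexity
  have hconv : Convex ℝ S := by
    intro x hx y hy a b ha hb hab
    set z := a • x + b • y with hz
    have hxz : x - z = b • (x - y) := by
      have h1 : a = 1 - b := by linarith
      rw [hz, h1]; module
    have hzy : z - y = a • (x - y) := by
      have h1 : b = 1 - a := by linarith
      rw [hz, h1]; module
    set d := ‖x - y‖ with hd
    have hA : ‖u x - u z‖ ≤ b * d := by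
      calc ‖u x - u z‖ ≤ ‖x - z‖ := hle x z
        _ = b * d := by rw [hxz, norm_smul, Real.norm_eq_abs, abs_of_nonneg hb]
    have hB : ‖u z - u y‖ ≤ a * d := by
      calc ‖u z - u y‖ ≤ ‖z - y‖ := hle z y
        _ = a * d := by rw [hzy, norm_smul, Real.norm_eq_abs, abs_of_nonneg ha]
    have htri : d ≤ ‖u x - u z‖ + ‖u z - u y‖ := by
      have hsplit : u x - u y = (u x - u z) + (u z - u y) := by abel
      calc d = ‖u x - u y‖ := (hS.1 x hx y hy).symm
        _ ≤ ‖u x - u z‖ + ‖u z - u y‖ := by rw [hsplit]; exact norm_add_le _ _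
    have hd1 : b * d + a * d = d := by
      rw [← add_mul, show b + a = 1 by linarith, one_mul]
    have hA' : ‖u x - u z‖ = b * d := by
      have := norm_nonneg (u x - u z); have := norm_nonneg (u z - u y); linarith
    have hB' : ‖u z - u y‖ = a * d := by
      have := norm_nonneg (u x - u z); have := norm_nonneg (u z - u y); linarith
    have hB'' : ‖u y - u z‖ = a * d := by rw [← hB']; exact norm_sub_rev _ _
    -- inner product between the two legs
    have hip : ⟪u x - u z, u y - u z⟫ = -(a * b * d ^ 2) := by
      have e1 := norm_sub_sq_real (u x - u z) (u y - u z)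
      have e2 : (u x - u z) - (u y - u z) = u x - u y := by abel
      rw [e2, hS.1 x hx y hy, ← hd, hA', hB''] at e1
      nlinarith [hab]
    have hcomb : a • (u x - u z) + b • (u y - u z) = (a • u x + b • u y) - u z := by
      have h1 : a = 1 - b := by linarith
      rw [h1]; module
    have hsq : ‖(a • u x + b • u y) - u z‖ ^ 2 = 0 := by
      rw [← hcomb, norm_add_sq_real, real_inner_smul_left, real_inner_smul_right,
        norm_smul, norm_smul, Real.norm_eq_abs, Real.norm_eq_abs,
        abs_of_nonneg ha, abs_of_nonneg hb, hA', hB'', hip]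
      ring
    have huz : u z = a • u x + b • u y := by
      have h0 : ‖(a • u x + b • u y) - u z‖ = 0 :=
        pow_eq_zero_iff (two_ne_zero) |>.mp hsq
      have := sub_eq_zero.mp (norm_eq_zero.mp h0)
      exact this.symm
    rw [hmem]
    intro w hw
    have hzw : z - w = a • (x - w) + b • (y - w) := by
      have h1 : a = 1 - b := by linarith
      rw [hz, h1]; module
    have huzw : u z - u w = a • (u x - u w) + b • (u y - u w) := by
      rw [huz]
      have h1 : a = 1 - b := by linarith
      rw [h1]; module
    have hsq2 : ‖u z - u w‖ ^ 2 = ‖z - w‖ ^ 2 := by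
      rw [huzw, hzw, norm_add_sq_real, norm_add_sq_real,
        real_inner_smul_left, real_inner_smul_left,
        real_inner_smul_right, real_inner_smul_right,
        norm_smul, norm_smul, norm_smul, norm_smul,
        hS.1 x hx w hw, hS.1 y hy w hw, hinner x hx y hy w hw]
    calc ‖u z - u w‖ = √(‖u z - u w‖ ^ 2) := (Real.sqrt_sq (norm_nonneg _)).symm
      _ = √(‖z - w‖ ^ 2) := by rw [hsq2]
      _ = ‖z - w‖ := Real.sqrt_sq (norm_nonneg _)
  -- The linear isometry on the vector span
  have hVspan : vectorSpan ℝ S = Submodule.span ℝ ((fun x => x - p) '' S) := by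
    rw [vectorSpan_eq_span_vsub_set_right ℝ hp]
    simp [vsub_eq_sub]
  obtain ⟨t, hts, htspan, hli⟩ := exists_linearIndependent ℝ ((fun x => x - p) '' S)
  have hsame : Submodule.span ℝ t = vectorSpan ℝ S := by rw [htspan, ← hVspan]
  have hchoice : ∀ v ∈ t, ∃ x ∈ S, x - p = v := by
    intro v hv
    obtain ⟨x, hx, hxv⟩ := hts hv
    exact ⟨x, hx, hxv⟩
  choose xv hxvS hxveq using hchoice
  have hrange : Set.range ((↑) : t → EuclideanSpace ℝ (Fin n)) = t := Subtype.range_coe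
  have heq : Submodule.span ℝ (Set.range ((↑) : t → EuclideanSpace ℝ (Fin n)))
      = vectorSpan ℝ S := by rw [hrange, hsame]
  let b : Module.Basis t ℝ (vectorSpan ℝ S) := (Module.Basis.span hli).map (LinearEquiv.ofEq _ _ heq)
  let T0 : (vectorSpan ℝ S) →ₗ[ℝ] EuclideanSpace ℝ (Fin m) :=
    b.constr ℝ (fun v => u (xv v.1 v.2) - u p)
  let T : EuclideanSpace ℝ (Fin n) →ₗ[ℝ] EuclideanSpace ℝ (Fin m) :=
    T0 ∘ₗ (Submodule.orthogonalProjectionOnto (vectorSpan ℝ S)).toLinearMap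
  have hTmem : ∀ (v : EuclideanSpace ℝ (Fin n)) (hv : v ∈ vectorSpan ℝ S),
      T v = T0 ⟨v, hv⟩ := by
    intro v hv
    have hproj : Submodule.orthogonalProjectionOnto (vectorSpan ℝ S) v
        = (⟨v, hv⟩ : vectorSpan ℝ S) :=
      Submodule.orthogonalProjectionOnto_mem_subspace_eq_self (⟨v, hv⟩ : vectorSpan ℝ S)
    simp only [T, LinearMap.comp_apply, ContinuousLinearMap.coe_coe, hproj]
  have hgen : ∀ v (hv : v ∈ t), T v = u (xv v hv) - u p := by
    intro v hv
    have hvV : v ∈ vectorSpan ℝ S := by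
      rw [← hsame]; exact Submodule.subset_span hv
    rw [hTmem v hvV]
    have hb : b ⟨v, hv⟩ = (⟨v, hvV⟩ : vectorSpan ℝ S) := by
      apply Subtype.ext
      simp [b, Module.Basis.span_apply]
    rw [← hb]
    exact b.constr_basis ℝ _ _
  have hC : ∀ z ∈ S, ∀ v ∈ Submodule.span ℝ t,
      ⟪T v, u z - u p⟫ = ⟪v, z - p⟫ := by
    intro z hz v hv
    induction hv using Submodule.span_induction with
    | mem w hw =>
        rw [hgen w hw]
        have := hinner (xv w hw) (hxvS w hw) z hz p hp
        rw [hxveq w hw] at this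
        exact this
    | zero => simp
    | add v₁ v₂ h₁ h₂ ih₁ ih₂ =>
        rw [map_add, inner_add_left, inner_add_left, ih₁, ih₂]
    | smul c v₁ h₁ ih =>
        rw [map_smul, real_inner_smul_left, real_inner_smul_left, ih]
  have hC2 : ∀ v ∈ Submodule.span ℝ t, ∀ w ∈ Submodule.span ℝ t,
      ⟪T v, T w⟫ = ⟪v, w⟫ := by
    intro v hv w hw
    induction hw using Submodule.span_induction with
    | mem w₁ hw₁ =>
        rw [hgen w₁ hw₁]
        have := hC (xv w₁ hw₁) (hxvS w₁ hw₁) v hv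
        rw [hxveq w₁ hw₁] at this
        exact this
    | zero => simp
    | add w₁ w₂ h₁ h₂ ih₁ ih₂ =>
        rw [map_add, inner_add_right, inner_add_right, ih₁, ih₂]
    | smul c w₁ h₁ ih =>
        rw [map_smul, real_inner_smul_right, real_inner_smul_right, ih]
  have hkey : ∀ x ∈ S, T (x - p) = u x - u p := by
    intro x hx
    have hmemV : x - p ∈ Submodule.span ℝ t := by
      rw [hsame]
      exact vsub_mem_vectorSpan ℝ hx hp
    have h1 : ⟪T (x - p), T (x - p)⟫ = ⟪x - p, x - p⟫ := hC2 _ hmemV _ hmemV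
    have h2 : ⟪T (x - p), u x - u p⟫ = ⟪x - p, x - p⟫ := hC x hx _ hmemV
    have h3 : ⟪u x - u p, u x - u p⟫ = ⟪x - p, x - p⟫ := by
      rw [real_inner_self_eq_norm_sq, real_inner_self_eq_norm_sq, hS.1 x hx p hp]
    have hz : ‖T (x - p) - (u x - u p)‖ ^ 2 = 0 := by
      have e := norm_sub_sq_real (T (x - p)) (u x - u p)
      have n1 := real_inner_self_eq_norm_sq (T (x - p))
      have n2 := real_inner_self_eq_norm_sq (u x - u p)
      linarith
    have h0 : ‖T (x - p) - (u x - u p)‖ = 0 := pow_eq_zero_iff two_ne_zero |>.mp hz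
    exact sub_eq_zero.mp (norm_eq_zero.mp h0)
  refine ⟨hSc, hconv, T, ?_, ?_⟩
  · intro v hv
    have hv' : v ∈ Submodule.span ℝ t := by rw [hsame]; exact hv
    have h1 : ⟪T v, T v⟫ = ⟪v, v⟫ := hC2 v hv' v hv'
    have n1 := real_inner_self_eq_norm_sq (T v)
    have n2 := real_inner_self_eq_norm_sq v
    calc ‖T v‖ = √(‖T v‖ ^ 2) := (Real.sqrt_sq (norm_nonneg _)).symm
      _ = √(‖v‖ ^ 2) := by rw [← n1, h1, n2]
      _ = ‖v‖ := Real.sqrt_sq (norm_nonneg _)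
  · intro x hx y hy
    have e : x - y = (x - p) - (y - p) := by abel
    rw [e, map_sub, hkey x hx, hkey y hy]
    abel
end

section
/- Let u : ℝⁿ → ℝᵐ be 1-Lipschitz and let S₁, S₂ be two leaves of u with tangent spaces V₁, V₂, orthogonal projections P₁, P₂ of ℝⁿ onto V₁, V₂, and linear isometries Tᵢ : Vᵢ → ℝᵐ with u(x) − u(y) = Tᵢ(x − y) for all x, y ∈ Sᵢ (i = 1,2). Let xᵢ ∈ Sᵢ and σᵢ = dist(xᵢ, ∂Sᵢ), i = 1,2. Then 2σ₁σ₂‖P₁P₂ − P₁T₁*T₂P₂‖ ≤ ‖x₁ − x₂‖² − ‖u(x₁) − u(x₂)‖², and for i = 1,2, 2σᵢ‖PᵢTᵢ*(u(x₁) − u(x₂)) − Pᵢ(x₁ − x₂)‖ ≤ ‖x₁ − x₂‖² − ‖u(x₁) − u(x₂)‖², where ‖·‖ on operators is the operator norm and Tᵢ* is the adjoint of Tᵢ. -/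
open Set RealInnerProductSpace
set_option maxHeartbeats 1000000

lemma aux_frontier {X : Type*} [TopologicalSpace X] {s t : Set X}
    (hs : IsPreconnected s) {x y : X} (hxs : x ∈ s) (hxt : x ∈ t)
    (hys : y ∈ s) (hyt : y ∉ t) : (s ∩ frontier t).Nonempty := by
  by_contra h
  rw [Set.not_nonempty_iff_eq_empty] at h
  have hfr : ∀ p ∈ s, p ∉ frontier t := fun p hp hf =>
    Set.eq_empty_iff_forall_notMem.mp h p ⟨hp, hf⟩
  have hsub : s ⊆ interior t ∪ (closure t)ᶜ := by
    intro p hp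
    by_cases hpc : p ∈ closure t
    · left
      have := hfr p hp
      rw [frontier, Set.mem_diff] at this
      push_neg at this
      exact this hpc
    · right; exact hpc
  have hxu : x ∈ s ∩ interior t := by
    refine ⟨hxs, ?_⟩
    have := hfr x hxs
    rw [frontier, Set.mem_diff] at this
    push_neg at this
    exact this (subset_closure hxt)
  have hyv : y ∈ s ∩ (closure t)ᶜ :=
    ⟨hys, fun hyc => hfr y hys ⟨hyc, fun hi => hyt (interior_subset hi)⟩⟩
  obtain ⟨p, _, hpi, hpc⟩ := hs (interior t) (closure t)ᶜ isOpen_interior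
    isClosed_closure.isOpen_compl hsub ⟨x, hxu⟩ ⟨y, hyv⟩
  exact hpc (subset_closure (interior_subset hpi))

lemma aux_scale {a b c : ℝ} (ha : 0 ≤ a) (hc : 0 ≤ c)
    (H : ∀ t : ℝ, 0 ≤ t → t < a → t * b ≤ c) : a * b ≤ c := by
  rcases le_or_gt b 0 with hb | hb
  · nlinarith
  · by_contra hcontra
    push_neg at hcontra
    have h1 : c / b < a := by rwa [div_lt_iff₀ hb]
    have h0 : 0 ≤ c / b := div_nonneg hc hb.le
    have := H ((c / b + a) / 2) (by linarith) (by linarith)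
    nlinarith [div_mul_cancel₀ c (ne_of_gt hb)]

lemma aux_ball {n : ℕ} {S : Set (EuclideanSpace ℝ (Fin n))}
    {x₀ : EuclideanSpace ℝ (Fin n)} (hx₀ : x₀ ∈ S) {σ : ℝ}
    (hσ : ENNReal.ofReal σ = EMetric.infEdist x₀ (intrinsicFrontier ℝ S))
    {v : EuclideanSpace ℝ (Fin n)} (hv : v ∈ vectorSpan ℝ S) (hvn : ‖v‖ < σ) :
    x₀ + v ∈ S := by
  by_contra hmem
  have hx₀A : x₀ ∈ affineSpan ℝ S := mem_affineSpan ℝ hx₀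
  have hmemA : ∀ t : ℝ, x₀ + t • v ∈ affineSpan ℝ S := by
    intro t
    have hd : t • v ∈ (affineSpan ℝ S).direction := by
      rw [direction_affineSpan]
      exact Submodule.smul_mem _ t hv
    have := AffineSubspace.vadd_mem_of_mem_direction hd hx₀A
    simpa [vadd_eq_add, add_comm] using this
  set γ : ℝ → affineSpan ℝ S := fun t => ⟨x₀ + t • v, hmemA t⟩ with hγ
  have hγc : Continuous γ := by
    apply Continuous.subtype_mk
    exact continuous_const.add (continuous_id.smul continuous_const)
  have hconn : IsPreconnected (γ '' Set.Icc (0:ℝ) 1) :=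
    isPreconnected_Icc.image _ hγc.continuousOn
  have h0 : γ 0 ∈ ((↑) ⁻¹' S : Set (affineSpan ℝ S)) := by
    simp only [hγ, Set.mem_preimage]
    simpa using hx₀
  have h1 : γ 1 ∉ ((↑) ⁻¹' S : Set (affineSpan ℝ S)) := by
    simp only [hγ, Set.mem_preimage]
    simpa using hmem
  obtain ⟨p, hpim, hpf⟩ := aux_frontier hconn
    (Set.mem_image_of_mem γ (Set.left_mem_Icc.mpr zero_le_one)) h0
    (Set.mem_image_of_mem γ (Set.right_mem_Icc.mpr zero_le_one)) h1
  have hpF : (p : EuclideanSpace ℝ (Fin n)) ∈ intrinsicFrontier ℝ S := ⟨p, hpf, rfl⟩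
  obtain ⟨t, ht, hpt⟩ := hpim
  have hdist : dist x₀ (p : EuclideanSpace ℝ (Fin n)) < σ := by
    have hpe : (p : EuclideanSpace ℝ (Fin n)) = x₀ + t • v := by rw [← hpt]
    rw [hpe, dist_eq_norm]
    have he : x₀ - (x₀ + t • v) = -(t • v) := by abel
    rw [he, norm_neg, norm_smul]
    have h1 : |t| ≤ 1 := abs_le.mpr ⟨by linarith [ht.1], ht.2⟩
    calc ‖t‖ * ‖v‖ ≤ 1 * ‖v‖ := by
            apply mul_le_mul_of_nonneg_right _ (norm_nonneg v)
            simpa [Real.norm_eq_abs] using h1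
      _ = ‖v‖ := one_mul _
      _ < σ := hvn
  have hle : ENNReal.ofReal σ ≤ edist x₀ (p : EuclideanSpace ℝ (Fin n)) := by
    rw [hσ]; exact EMetric.infEdist_le_edist_of_mem hpF
  rw [edist_dist] at hle
  have := (ENNReal.ofReal_le_ofReal_iff dist_nonneg).mp hle
  linarith

lemma aux_expand {E F : Type*} [NormedAddCommGroup E] [InnerProductSpace ℝ E]
    [NormedAddCommGroup F] [InnerProductSpace ℝ F]
    (z : F) (w v s : E) (Tv Ts : F) (hTv : ‖Tv‖ = ‖v‖) (hTs : ‖Ts‖ = ‖s‖)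
    (h : ‖Tv + z - Ts‖ ≤ ‖v + w - s‖) :
    2 * (⟪z, Tv⟫ - ⟪w, v⟫ + ⟪w, s⟫ - ⟪z, Ts⟫ + ⟪v, s⟫ - ⟪Tv, Ts⟫) ≤ ‖w‖ ^ 2 - ‖z‖ ^ 2 := by
  have hsq : ‖Tv + z - Ts‖ ^ 2 ≤ ‖v + w - s‖ ^ 2 :=
    pow_le_pow_left₀ (norm_nonneg _) h 2
  have hL : ⟪Tv + z - Ts, Tv + z - Ts⟫ ≤ ⟪v + w - s, v + w - s⟫ := by
    rw [real_inner_self_eq_norm_sq, real_inner_self_eq_norm_sq]; exact hsq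
  simp only [inner_sub_left, inner_sub_right, inner_add_left, inner_add_right] at hL
  have e1 : ⟪Tv, Tv⟫ = ‖v‖ ^ 2 := by rw [real_inner_self_eq_norm_sq, hTv]
  have e2 : ⟪Ts, Ts⟫ = ‖s‖ ^ 2 := by rw [real_inner_self_eq_norm_sq, hTs]
  have e3 : ⟪v, v⟫ = ‖v‖ ^ 2 := real_inner_self_eq_norm_sq v
  have e4 : ⟪s, s⟫ = ‖s‖ ^ 2 := real_inner_self_eq_norm_sq s
  have e5 : ⟪w, w⟫ = ‖w‖ ^ 2 := real_inner_self_eq_norm_sq w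
  have e6 : ⟪z, z⟫ = ‖z‖ ^ 2 := real_inner_self_eq_norm_sq z
  have c1 := real_inner_comm z Tv
  have c2 := real_inner_comm z Ts
  have c3 := real_inner_comm Tv Ts
  have c4 := real_inner_comm v s
  have c5 := real_inner_comm w v
  have c6 := real_inner_comm w s
  linarith


/-- The orthogonal projection of `ℝⁿ` onto a subspace `V`, as a map `ℝⁿ → ℝⁿ`. -/
noncomputable def projL {n : ℕ} (V : Submodule ℝ (EuclideanSpace ℝ (Fin n))) :
    EuclideanSpace ℝ (Fin n) →L[ℝ] EuclideanSpace ℝ (Fin n) :=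
  V.subtypeL.comp (Submodule.orthogonalProjection V)

section facts
variable {n : ℕ} (V : Submodule ℝ (EuclideanSpace ℝ (Fin n)))

lemma projL_sa : ContinuousLinearMap.adjoint (projL V) = projL V :=
  ContinuousLinearMap.isSelfAdjoint_iff'.mp (isSelfAdjoint_starProjection V)

lemma projL_mem (y : EuclideanSpace ℝ (Fin n)) : projL V y ∈ V := (Submodule.orthogonalProjection V y).2

lemma projL_fix {v : EuclideanSpace ℝ (Fin n)} (hv : v ∈ V) : projL V v = v := by
  have := Submodule.orthogonalProjection_mem_subspace_eq_self (K := V) ⟨v, hv⟩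
  simpa [projL] using congrArg (Subtype.val) this

lemma projL_inner (y : EuclideanSpace ℝ (Fin n)) {v : EuclideanSpace ℝ (Fin n)} (hv : v ∈ V) :
    ⟪y, v⟫ = ⟪projL V y, v⟫ := by
  have h := Submodule.starProjection_inner_eq_zero (K := V) y v hv
  have : ⟪y - projL V y, v⟫ = 0 := h
  rw [inner_sub_left] at this
  linarith

lemma projL_norm_le (y : EuclideanSpace ℝ (Fin n)) : ‖projL V y‖ ≤ ‖y‖ := by
  have h1 : ‖projL V y‖ = ‖Submodule.orthogonalProjection V y‖ := rfl
  have h2 := (Submodule.orthogonalProjection V).le_opNorm y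
  have h3 := Submodule.orthogonalProjection_norm_le V
  calc ‖projL V y‖ = ‖Submodule.orthogonalProjection V y‖ := h1
    _ ≤ ‖(Submodule.orthogonalProjection V : _ →L[ℝ] V)‖ * ‖y‖ := h2
    _ ≤ 1 * ‖y‖ := mul_le_mul_of_nonneg_right h3 (norm_nonneg y)
    _ = ‖y‖ := one_mul _

end facts

/-- Let `S₁, S₂` be leaves of a `1`-Lipschitz map `u : ℝⁿ → ℝᵐ`, with
tangent spaces `Vᵢ = vectorSpan Sᵢ`, orthogonal projections `Pᵢ` onto `Vᵢ`, and linear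
maps `Tᵢ` isometric on `Vᵢ` with `u x − u y = Tᵢ (x − y)` on `Sᵢ`.  Let `xᵢ ∈ Sᵢ` and let
`σᵢ = dist(xᵢ, ∂Sᵢ)` (distance to the relative boundary, assumed finite; the distance to
the empty set being `+∞`).  Then
`2σ₁σ₂‖P₁P₂ − P₁T₁*T₂P₂‖ ≤ ‖x₁ − x₂‖² − ‖u x₁ − u x₂‖²` and, for `i = 1, 2`,
`2σᵢ‖PᵢTᵢ*(u x₁ − u x₂) − Pᵢ(x₁ − x₂)‖ ≤ ‖x₁ − x₂‖² − ‖u x₁ − u x₂‖²`;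
here `PᵢTᵢ* = (TᵢPᵢ)*` and `‖·‖` on operators is the operator norm. -/



theorem stmt_3 {n m : ℕ} (u : EuclideanSpace ℝ (Fin n) → EuclideanSpace ℝ (Fin m))
    (hu : LipschitzWith 1 u)
    (S₁ S₂ : Set (EuclideanSpace ℝ (Fin n))) (hS₁ : IsLeaf u S₁) (hS₂ : IsLeaf u S₂)
    (T₁ T₂ : EuclideanSpace ℝ (Fin n) →L[ℝ] EuclideanSpace ℝ (Fin m))
    (hT₁iso : ∀ v ∈ vectorSpan ℝ S₁, ‖T₁ v‖ = ‖v‖)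
    (hT₂iso : ∀ v ∈ vectorSpan ℝ S₂, ‖T₂ v‖ = ‖v‖)
    (hT₁ : ∀ x ∈ S₁, ∀ y ∈ S₁, u x - u y = T₁ (x - y))
    (hT₂ : ∀ x ∈ S₂, ∀ y ∈ S₂, u x - u y = T₂ (x - y))
    (x₁ x₂ : EuclideanSpace ℝ (Fin n)) (hx₁ : x₁ ∈ S₁) (hx₂ : x₂ ∈ S₂)
    (σ₁ σ₂ : ℝ) (hσ₁0 : 0 ≤ σ₁) (hσ₂0 : 0 ≤ σ₂)
    (hσ₁ : ENNReal.ofReal σ₁ = EMetric.infEdist x₁ (intrinsicFrontier ℝ S₁))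
    (hσ₂ : ENNReal.ofReal σ₂ = EMetric.infEdist x₂ (intrinsicFrontier ℝ S₂)) :
    2 * σ₁ * σ₂ *
        ‖(projL (vectorSpan ℝ S₁)).comp (projL (vectorSpan ℝ S₂)) -
          (ContinuousLinearMap.adjoint (T₁.comp (projL (vectorSpan ℝ S₁)))).comp
            (T₂.comp (projL (vectorSpan ℝ S₂)))‖ ≤
      ‖x₁ - x₂‖ ^ 2 - ‖u x₁ - u x₂‖ ^ 2 ∧
    2 * σ₁ *
        ‖ContinuousLinearMap.adjoint (T₁.comp (projL (vectorSpan ℝ S₁))) (u x₁ - u x₂) -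
          projL (vectorSpan ℝ S₁) (x₁ - x₂)‖ ≤
      ‖x₁ - x₂‖ ^ 2 - ‖u x₁ - u x₂‖ ^ 2 ∧
    2 * σ₂ *
        ‖ContinuousLinearMap.adjoint (T₂.comp (projL (vectorSpan ℝ S₂))) (u x₁ - u x₂) -
          projL (vectorSpan ℝ S₂) (x₁ - x₂)‖ ≤
      ‖x₁ - x₂‖ ^ 2 - ‖u x₁ - u x₂‖ ^ 2 := by
  set V₁ := vectorSpan ℝ S₁ with hV₁def
  set V₂ := vectorSpan ℝ S₂ with hV₂def
  set P₁ := projL V₁ with hP₁def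
  set P₂ := projL V₂ with hP₂def
  set A₁ := ContinuousLinearMap.adjoint (T₁.comp P₁) with hA₁def
  set A₂ := ContinuousLinearMap.adjoint (T₂.comp P₂) with hA₂def
  set w := x₁ - x₂ with hw
  set z := u x₁ - u x₂ with hz
  set D := ‖w‖ ^ 2 - ‖z‖ ^ 2 with hDdef
  have hD : 0 ≤ D := by
    have h : ‖u x₁ - u x₂‖ ≤ ‖x₁ - x₂‖ := by
      have := hu.dist_le_mul x₁ x₂
      simpa [dist_eq_norm] using this
    have : ‖z‖ ≤ ‖w‖ := h
    nlinarith [norm_nonneg z]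
  have hball₁ : ∀ v ∈ V₁, ‖v‖ < σ₁ → x₁ + v ∈ S₁ := fun v hv hn => aux_ball hx₁ hσ₁ hv hn
  have hball₂ : ∀ s ∈ V₂, ‖s‖ < σ₂ → x₂ + s ∈ S₂ := fun s hs hn => aux_ball hx₂ hσ₂ hs hn
  have hkey : ∀ a ∈ S₁, ∀ b ∈ S₂,
      2 * (⟪z, T₁ (a - x₁)⟫ - ⟪w, a - x₁⟫ + ⟪w, b - x₂⟫ - ⟪z, T₂ (b - x₂)⟫
        + ⟪a - x₁, b - x₂⟫ - ⟪T₁ (a - x₁), T₂ (b - x₂)⟫) ≤ D := by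
    intro a ha b hb
    have hv : a - x₁ ∈ V₁ := by
      have := vsub_mem_vectorSpan ℝ ha hx₁
      simpa [hV₁def] using this
    have hs : b - x₂ ∈ V₂ := by
      have := vsub_mem_vectorSpan ℝ hb hx₂
      simpa [hV₂def] using this
    have hTv : ‖T₁ (a - x₁)‖ = ‖a - x₁‖ := hT₁iso _ hv
    have hTs : ‖T₂ (b - x₂)‖ = ‖b - x₂‖ := hT₂iso _ hs
    have hnorm : ‖T₁ (a - x₁) + z - T₂ (b - x₂)‖ ≤ ‖(a - x₁) + w - (b - x₂)‖ := by
      have h1 : T₁ (a - x₁) + z - T₂ (b - x₂) = u a - u b := by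
        rw [← hT₁ a ha x₁ hx₁, ← hT₂ b hb x₂ hx₂, hz]; abel
      have h2 : (a - x₁) + w - (b - x₂) = a - b := by rw [hw]; abel
      rw [h1, h2]
      have h3 := hu.dist_le_mul a b
      simpa [dist_eq_norm] using h3
    exact aux_expand z w (a - x₁) (b - x₂) _ _ hTv hTs hnorm
  -- common facts about A₁, A₂
  have hA₁app : ∀ y, A₁ y = P₁ ((ContinuousLinearMap.adjoint T₁) y) := by
    intro y
    rw [hA₁def, hP₁def, ContinuousLinearMap.adjoint_comp, projL_sa,
      ContinuousLinearMap.comp_apply]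
  have hA₂app : ∀ y, A₂ y = P₂ ((ContinuousLinearMap.adjoint T₂) y) := by
    intro y
    rw [hA₂def, hP₂def, ContinuousLinearMap.adjoint_comp, projL_sa,
      ContinuousLinearMap.comp_apply]
  have hq₁inner : ∀ v ∈ V₁, ⟪A₁ z - P₁ w, v⟫ = ⟪z, T₁ v⟫ - ⟪w, v⟫ := by
    intro v hv
    have h1 : ⟪A₁ z, v⟫ = ⟪z, T₁ (P₁ v)⟫ := by
      rw [hA₁def]
      exact ContinuousLinearMap.adjoint_inner_left (T₁.comp P₁) v z
    have h2 : P₁ v = v := by rw [hP₁def]; exact projL_fix V₁ hv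
    have h3 : ⟪P₁ w, v⟫ = ⟪w, v⟫ := by rw [hP₁def]; exact (projL_inner V₁ w hv).symm
    rw [inner_sub_left, h1, h2, h3]
  have hq₂inner : ∀ s ∈ V₂, ⟪A₂ z - P₂ w, s⟫ = ⟪z, T₂ s⟫ - ⟪w, s⟫ := by
    intro s hs
    have h1 : ⟪A₂ z, s⟫ = ⟪z, T₂ (P₂ s)⟫ := by
      rw [hA₂def]
      exact ContinuousLinearMap.adjoint_inner_left (T₂.comp P₂) s z
    have h2 : P₂ s = s := by rw [hP₂def]; exact projL_fix V₂ hs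
    have h3 : ⟪P₂ w, s⟫ = ⟪w, s⟫ := by rw [hP₂def]; exact (projL_inner V₂ w hs).symm
    rw [inner_sub_left, h1, h2, h3]
  have hq₁mem : A₁ z - P₁ w ∈ V₁ := by
    rw [hA₁app, hP₁def]
    exact Submodule.sub_mem _ (projL_mem V₁ _) (projL_mem V₁ _)
  have hq₂mem : A₂ z - P₂ w ∈ V₂ := by
    rw [hA₂app, hP₂def]
    exact Submodule.sub_mem _ (projL_mem V₂ _) (projL_mem V₂ _)
  -- claim 2
  have claim2 : 2 * σ₁ * ‖A₁ z - P₁ w‖ ≤ D := by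
    set q := A₁ z - P₁ w with hqdef
    have hstep : ∀ t : ℝ, 0 ≤ t → t < σ₁ → t * (2 * ‖q‖) ≤ D := by
      intro t ht0 ht1
      rcases eq_or_ne q 0 with hq0 | hq0
      · rw [hq0]; simpa using hD
      · have hqn : 0 < ‖q‖ := norm_pos_iff.mpr hq0
        set v := (t / ‖q‖) • q with hvdef
        have hvmem : v ∈ V₁ := Submodule.smul_mem _ _ hq₁mem
        have hvnorm : ‖v‖ = t := by
          rw [hvdef, norm_smul, Real.norm_eq_abs,
            abs_of_nonneg (div_nonneg ht0 hqn.le), div_mul_cancel₀ _ (ne_of_gt hqn)]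
        have ha : x₁ + v ∈ S₁ := hball₁ v hvmem (by rw [hvnorm]; exact ht1)
        have h := hkey (x₁ + v) ha x₂ hx₂
        have hsub : x₁ + v - x₁ = v := by abel
        rw [hsub, sub_self] at h
        simp only [inner_zero_left, inner_zero_right, map_zero, add_zero, sub_zero] at h
        have h4 : ⟪z, T₁ v⟫ - ⟪w, v⟫ = t * ‖q‖ := by
          rw [← hq₁inner v hvmem, hvdef, real_inner_smul_right, real_inner_self_eq_norm_sq]
          field_simp
        linarith
    have := aux_scale hσ₁0 hD hstep
    linarith
  -- claim 3
  have claim3 : 2 * σ₂ * ‖A₂ z - P₂ w‖ ≤ D := by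
    set q := A₂ z - P₂ w with hqdef
    have hstep : ∀ t : ℝ, 0 ≤ t → t < σ₂ → t * (2 * ‖q‖) ≤ D := by
      intro t ht0 ht1
      rcases eq_or_ne q 0 with hq0 | hq0
      · rw [hq0]; simpa using hD
      · have hqn : 0 < ‖q‖ := norm_pos_iff.mpr hq0
        set s := (-(t / ‖q‖)) • q with hsdef
        have hsmem : s ∈ V₂ := Submodule.smul_mem _ _ hq₂mem
        have hsnorm : ‖s‖ = t := by
          rw [hsdef, norm_smul, Real.norm_eq_abs, abs_neg,
            abs_of_nonneg (div_nonneg ht0 hqn.le), div_mul_cancel₀ _ (ne_of_gt hqn)]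
        have hb : x₂ + s ∈ S₂ := hball₂ s hsmem (by rw [hsnorm]; exact ht1)
        have h := hkey x₁ hx₁ (x₂ + s) hb
        have hsub : x₂ + s - x₂ = s := by abel
        rw [hsub, sub_self] at h
        simp only [inner_zero_left, inner_zero_right, map_zero, add_zero, sub_zero,
          zero_sub, zero_add, map_zero] at h
        have h4 : ⟪w, s⟫ - ⟪z, T₂ s⟫ = t * ‖q‖ := by
          have h5 := hq₂inner s hsmem
          rw [hsdef, real_inner_smul_right, real_inner_self_eq_norm_sq] at h5
          have h6 : ⟪w, s⟫ - ⟪z, T₂ s⟫ = -(⟪z, T₂ s⟫ - ⟪w, s⟫) := by ring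
          rw [h6, ← h5]
          field_simp
        linarith
    have := aux_scale hσ₂0 hD hstep
    linarith
  -- claim 1
  have hbil : ∀ v ∈ V₁, ‖v‖ < σ₁ → ∀ s ∈ V₂, ‖s‖ < σ₂ →
      2 * (⟪v, s⟫ - ⟪T₁ v, T₂ s⟫) ≤ D := by
    intro v hv hvn s hs hsn
    have h1 := hkey (x₁ + v) (hball₁ v hv hvn) (x₂ + s) (hball₂ s hs hsn)
    have h2 := hkey (x₁ + -v) (hball₁ (-v) (neg_mem hv) (by rwa [norm_neg]))
      (x₂ + -s) (hball₂ (-s) (neg_mem hs) (by rwa [norm_neg]))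
    have e1 : x₁ + v - x₁ = v := by abel
    have e2 : x₂ + s - x₂ = s := by abel
    have e3 : x₁ + -v - x₁ = -v := by abel
    have e4 : x₂ + -s - x₂ = -s := by abel
    rw [e1, e2] at h1
    rw [e3, e4] at h2
    simp only [map_neg, inner_neg_left, inner_neg_right, neg_neg] at h2
    linarith
  have claim1 : 2 * σ₁ * σ₂ * ‖P₁.comp P₂ - A₁.comp (T₂.comp P₂)‖ ≤ D := by
    set B := P₁.comp P₂ - A₁.comp (T₂.comp P₂) with hBdef
    have hBinner : ∀ e f, ⟪f, B e⟫ = ⟪P₁ f, P₂ e⟫ - ⟪T₁ (P₁ f), T₂ (P₂ e)⟫ := by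
      intro e f
      have hb : B e = P₁ (P₂ e) - A₁ (T₂ (P₂ e)) := rfl
      rw [hb, inner_sub_right]
      have h1 : ⟪f, P₁ (P₂ e)⟫ = ⟪P₁ f, P₂ e⟫ := by
        have := ContinuousLinearMap.adjoint_inner_right (projL V₁) f (P₂ e)
        rw [projL_sa] at this
        rw [hP₁def]
        exact this
      have h2 : ⟪f, A₁ (T₂ (P₂ e))⟫ = ⟪T₁ (P₁ f), T₂ (P₂ e)⟫ := by
        have := ContinuousLinearMap.adjoint_inner_right (T₁.comp P₁) f (T₂ (P₂ e))
        rw [← hA₁def] at this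
        exact this
      rw [h1, h2]
    have hBe : ∀ e, σ₁ * (σ₂ * (2 * ‖B e‖)) ≤ D * ‖e‖ := by
      intro e
      have hX : ‖B e‖ ^ 2 = ⟪P₁ (B e), P₂ e⟫ - ⟪T₁ (P₁ (B e)), T₂ (P₂ e)⟫ := by
        rw [← real_inner_self_eq_norm_sq]
        exact hBinner e (B e)
      rcases eq_or_ne (B e) 0 with hf0 | hf0
      · rw [hf0]
        simp only [norm_zero, mul_zero]
        exact mul_nonneg hD (norm_nonneg e)
      · have hfn : 0 < ‖B e‖ := norm_pos_iff.mpr hf0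
        set f := B e with hfdef
        set v₀ := P₁ f with hv₀def
        set s₀ := P₂ e with hs₀def
        have hv₀mem : v₀ ∈ V₁ := by rw [hv₀def, hP₁def]; exact projL_mem V₁ f
        have hs₀mem : s₀ ∈ V₂ := by rw [hs₀def, hP₂def]; exact projL_mem V₂ e
        have hv₀ : v₀ ≠ 0 := by
          intro h0
          rw [h0] at hX
          simp only [inner_zero_left, map_zero, sub_zero, sub_self] at hX
          nlinarith
        have hs₀ : s₀ ≠ 0 := by
          intro h0
          rw [h0] at hX
          simp only [inner_zero_right, map_zero, sub_zero, sub_self] at hX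
          nlinarith
        have hv₀n : 0 < ‖v₀‖ := norm_pos_iff.mpr hv₀
        have hs₀n : 0 < ‖s₀‖ := norm_pos_iff.mpr hs₀
        have hRHS0 : 0 ≤ D * (‖v₀‖ * ‖s₀‖) :=
          mul_nonneg hD (mul_nonneg hv₀n.le hs₀n.le)
        have hstep2 : ∀ t₁ : ℝ, 0 ≤ t₁ → t₁ < σ₁ → ∀ t₂ : ℝ, 0 ≤ t₂ → t₂ < σ₂ →
            2 * (t₁ * t₂) * ‖f‖ ^ 2 ≤ D * (‖v₀‖ * ‖s₀‖) := by
          intro t₁ h10 h11 t₂ h20 h21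
          set v := (t₁ / ‖v₀‖) • v₀ with hvdef
          set s := (t₂ / ‖s₀‖) • s₀ with hsdef
          have hvmem : v ∈ V₁ := Submodule.smul_mem _ _ hv₀mem
          have hsmem : s ∈ V₂ := Submodule.smul_mem _ _ hs₀mem
          have hvnorm : ‖v‖ = t₁ := by
            rw [hvdef, norm_smul, Real.norm_eq_abs,
              abs_of_nonneg (div_nonneg h10 hv₀n.le), div_mul_cancel₀ _ (ne_of_gt hv₀n)]
          have hsnorm : ‖s‖ = t₂ := by
            rw [hsdef, norm_smul, Real.norm_eq_abs,
              abs_of_nonneg (div_nonneg h20 hs₀n.le), div_mul_cancel₀ _ (ne_of_gt hs₀n)]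
          have h := hbil v hvmem (by rw [hvnorm]; exact h11) s hsmem (by rw [hsnorm]; exact h21)
          have hc : ⟪v, s⟫ - ⟪T₁ v, T₂ s⟫ = (t₁ / ‖v₀‖) * ((t₂ / ‖s₀‖) * ‖f‖ ^ 2) := by
            have hexp : ⟪v, s⟫ - ⟪T₁ v, T₂ s⟫
                = (t₁ / ‖v₀‖) * ((t₂ / ‖s₀‖) * (⟪v₀, s₀⟫ - ⟪T₁ v₀, T₂ s₀⟫)) := by
              rw [hvdef, hsdef, map_smul, map_smul, real_inner_smul_left,
                real_inner_smul_left, real_inner_smul_right, real_inner_smul_right]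
              ring
            rw [hexp, ← hX]
          rw [hc] at h
          have hmul := mul_le_mul_of_nonneg_right h (mul_nonneg hv₀n.le hs₀n.le)
          have hkeyeq : 2 * ((t₁ / ‖v₀‖) * ((t₂ / ‖s₀‖) * ‖f‖ ^ 2)) * (‖v₀‖ * ‖s₀‖)
              = 2 * (t₁ * t₂) * ‖f‖ ^ 2 := by
            field_simp
          rw [hkeyeq] at hmul
          exact hmul
        have hstep1 : ∀ t₁ : ℝ, 0 ≤ t₁ → t₁ < σ₁ →
            t₁ * (σ₂ * (2 * ‖f‖ ^ 2)) ≤ D * (‖v₀‖ * ‖s₀‖) := by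
          intro t₁ h10 h11
          have hin : σ₂ * (2 * t₁ * ‖f‖ ^ 2) ≤ D * (‖v₀‖ * ‖s₀‖) := by
            apply aux_scale hσ₂0 hRHS0
            intro t₂ h20 h21
            calc t₂ * (2 * t₁ * ‖f‖ ^ 2) = 2 * (t₁ * t₂) * ‖f‖ ^ 2 := by ring
              _ ≤ _ := hstep2 t₁ h10 h11 t₂ h20 h21
          calc t₁ * (σ₂ * (2 * ‖f‖ ^ 2)) = σ₂ * (2 * t₁ * ‖f‖ ^ 2) := by ring
            _ ≤ _ := hin
        have hfin : σ₁ * (σ₂ * (2 * ‖f‖ ^ 2)) ≤ D * (‖v₀‖ * ‖s₀‖) :=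
          aux_scale hσ₁0 hRHS0 hstep1
        have hb1 : ‖v₀‖ ≤ ‖f‖ := by rw [hv₀def, hP₁def]; exact projL_norm_le V₁ f
        have hb2 : ‖s₀‖ ≤ ‖e‖ := by rw [hs₀def, hP₂def]; exact projL_norm_le V₂ e
        have h5 : D * (‖v₀‖ * ‖s₀‖) ≤ D * (‖f‖ * ‖e‖) :=
          mul_le_mul_of_nonneg_left
            (mul_le_mul hb1 hb2 hs₀n.le (norm_nonneg _)) hD
        have hineq : (σ₁ * (σ₂ * (2 * ‖f‖))) * ‖f‖ ≤ (D * ‖e‖) * ‖f‖ := by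
          calc (σ₁ * (σ₂ * (2 * ‖f‖))) * ‖f‖ = σ₁ * (σ₂ * (2 * ‖f‖ ^ 2)) := by ring
            _ ≤ D * (‖v₀‖ * ‖s₀‖) := hfin
            _ ≤ D * (‖f‖ * ‖e‖) := h5
            _ = (D * ‖e‖) * ‖f‖ := by ring
        exact le_of_mul_le_mul_right hineq hfn
    rcases eq_or_lt_of_le (mul_nonneg hσ₁0 hσ₂0) with h0 | hpos
    · have hz0 : 2 * σ₁ * σ₂ * ‖B‖ = 0 := by
        have : σ₁ * σ₂ = 0 := h0.symm
        calc 2 * σ₁ * σ₂ * ‖B‖ = 2 * (σ₁ * σ₂) * ‖B‖ := by ring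
          _ = 0 := by rw [this]; ring
      linarith
    · have hop : ‖B‖ ≤ D / (2 * (σ₁ * σ₂)) := by
        apply ContinuousLinearMap.opNorm_le_bound B
          (div_nonneg hD (by positivity))
        intro e
        rw [div_mul_eq_mul_div, le_div_iff₀ (by positivity)]
        have := hBe e
        nlinarith [this]
      have := mul_le_mul_of_nonneg_left hop (by positivity : (0:ℝ) ≤ 2 * σ₁ * σ₂)
      calc 2 * σ₁ * σ₂ * ‖B‖ ≤ 2 * σ₁ * σ₂ * (D / (2 * (σ₁ * σ₂))) := this
        _ = D := by rw [mul_div_assoc', show 2 * σ₁ * σ₂ * D = 2 * (σ₁ * σ₂) * D by ring, mul_div_cancel_left₀ D (mul_ne_zero two_ne_zero hpos.ne')]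
  exact ⟨claim1, claim2, claim3⟩
end

section
/- Let m ≤ n and let u : ℝⁿ → ℝᵐ be 1-Lipschitz. If S is a leaf of u of dimension m, then u is (Fréchet) differentiable at every point of the relative interior of S. -/
open RealInnerProductSpace Module Asymptotics

set_option maxHeartbeats 4000000 in
/-- Let `m ≤ n` and let `u : ℝⁿ → ℝᵐ` be `1`-Lipschitz.  If `S` is a
leaf of `u` of dimension `m` (the dimension of its tangent space `vectorSpan ℝ S`),
then `u` is Fréchet differentiable at every point of the relative interior of `S`. -/
theorem stmt_6 {n m : ℕ} (hmn : m ≤ n)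
    (u : EuclideanSpace ℝ (Fin n) → EuclideanSpace ℝ (Fin m))
    (hu : LipschitzWith 1 u)
    (S : Set (EuclideanSpace ℝ (Fin n))) (hS : IsLeaf u S)
    (hdim : Module.finrank ℝ (vectorSpan ℝ S) = m) :
    ∀ z ∈ intrinsicInterior ℝ S, DifferentiableAt ℝ u z := by
  intro z hz
  obtain ⟨hiso, -⟩ := hS
  have hzS : z ∈ S := intrinsicInterior_subset hz
  set V : Submodule ℝ (EuclideanSpace ℝ (Fin n)) := vectorSpan ℝ S with hVdef
  -- Step A: a relative ball around z lies in S
  obtain ⟨r, hr, hball⟩ : ∃ r > 0, ∀ x, x ∈ V → ‖x‖ < r → z + x ∈ S := by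
    rw [mem_intrinsicInterior] at hz
    obtain ⟨y, hy, hyz⟩ := hz
    rw [mem_interior_iff_mem_nhds, Metric.mem_nhds_iff] at hy
    obtain ⟨ε, hε, hb⟩ := hy
    refine ⟨ε, hε, fun x hxV hxr => ?_⟩
    have hzspan : z ∈ affineSpan ℝ S := by rw [← hyz]; exact y.2
    have hmem : z + x ∈ affineSpan ℝ S := by
      have := AffineSubspace.vadd_mem_of_mem_direction
        (p := z) (v := x) (by rwa [direction_affineSpan]) hzspan
      simpa [add_comm] using this
    have : (⟨z + x, hmem⟩ : affineSpan ℝ S) ∈ Metric.ball y ε := by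
      rw [Metric.mem_ball, Subtype.dist_eq, hyz, dist_eq_norm]
      simpa using hxr
    exact hb this
  -- the locally isometric map
  set φ : EuclideanSpace ℝ (Fin n) → EuclideanSpace ℝ (Fin m) :=
    fun x => u (z + x) - u z with hφdef
  have hφnorm : ∀ x, x ∈ V → ‖x‖ < r → ‖φ x‖ = ‖x‖ := by
    intro x hxV hxr
    have := hiso _ (hball x hxV hxr) _ hzS
    simpa using this
  have hφdist : ∀ x, x ∈ V → ‖x‖ < r → ∀ y, y ∈ V → ‖y‖ < r →
      ‖φ x - φ y‖ = ‖x - y‖ := by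
    intro x hxV hxr y hyV hyr
    have hxy : φ x - φ y = u (z + x) - u (z + y) := by
      simp only [hφdef]; abel
    rw [hxy]
    have := hiso _ (hball x hxV hxr) _ (hball y hyV hyr)
    simpa [add_sub_add_left_eq_sub] using this
  have hφinner : ∀ x, x ∈ V → ‖x‖ < r → ∀ y, y ∈ V → ‖y‖ < r →
      ⟪φ x, φ y⟫ = ⟪x, y⟫ := by
    intro x hxV hxr y hyV hyr
    have h1 := norm_sub_sq_real (φ x) (φ y)
    have h2 := norm_sub_sq_real x y
    rw [hφdist x hxV hxr y hyV hyr, hφnorm x hxV hxr, hφnorm y hyV hyr] at h1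
    linarith
  -- orthonormal basis of V
  let b : OrthonormalBasis (Fin m) ℝ V := (stdOrthonormalBasis ℝ V).reindex (finCongr hdim)
  have hbV : ∀ i, (b i : EuclideanSpace ℝ (Fin n)) ∈ V := fun i => (b i).2
  have hbnorm : ∀ i, ‖(b i : EuclideanSpace ℝ (Fin n))‖ = 1 := fun i => by
    exact b.orthonormal.1 i
  have hbinner : ∀ i j, ⟪(b i : EuclideanSpace ℝ (Fin n)), (b j : EuclideanSpace ℝ (Fin n))⟫
      = if i = j then 1 else 0 := by
    intro i j
    have := orthonormal_iff_ite.1 b.orthonormal i j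
    simpa [Submodule.coe_inner] using this
  -- the candidate derivative
  set c : Fin m → EuclideanSpace ℝ (Fin m) :=
    fun i => (2 / r) • φ ((r / 2) • (b i : EuclideanSpace ℝ (Fin n))) with hcdef
  set T : EuclideanSpace ℝ (Fin n) →L[ℝ] EuclideanSpace ℝ (Fin m) :=
    ∑ i, (innerSL ℝ ((b i : EuclideanSpace ℝ (Fin n)))).smulRight (c i) with hTdef
  have hT : ∀ v, T v = ∑ i, ⟪(b i : EuclideanSpace ℝ (Fin n)), v⟫ • c i := by
    intro v
    simp [hTdef, ContinuousLinearMap.sum_apply]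
  have hsb : ∀ i, ((r / 2) • (b i : EuclideanSpace ℝ (Fin n))) ∈ V :=
    fun i => V.smul_mem _ (hbV i)
  have hsbn : ∀ i, ‖(r / 2) • (b i : EuclideanSpace ℝ (Fin n))‖ < r := by
    intro i
    rw [norm_smul, hbnorm i, mul_one, Real.norm_eq_abs, abs_of_pos (by positivity)]
    linarith
  have hcφ : ∀ i, ∀ x, x ∈ V → ‖x‖ < r →
      ⟪c i, φ x⟫ = ⟪(b i : EuclideanSpace ℝ (Fin n)), x⟫ := by
    intro i x hxV hxr
    rw [hcdef]
    simp only [real_inner_smul_left]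
    rw [hφinner _ (hsb i) (hsbn i) x hxV hxr, real_inner_smul_left]
    field_simp
  have hcc : ∀ i j, ⟪c i, c j⟫ = if i = j then 1 else 0 := by
    intro i j
    have h1 : ⟪c i, c j⟫
        = (2 / r) * ⟪c i, φ ((r / 2) • (b j : EuclideanSpace ℝ (Fin n)))⟫ := by
      conv_lhs => rw [hcdef]
      exact real_inner_smul_right _ _ _
    rw [h1, hcφ i _ (hsb j) (hsbn j), real_inner_smul_right, hbinner i j]
    have hr' : (r : ℝ) ≠ 0 := ne_of_gt hr
    split <;> field_simp
  have hTφ : ∀ v, ∀ x, x ∈ V → ‖x‖ < r →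
      ⟪T v, φ x⟫ = ∑ i, ⟪(b i : EuclideanSpace ℝ (Fin n)), v⟫
        * ⟪(b i : EuclideanSpace ℝ (Fin n)), x⟫ := by
    intro v x hxV hxr
    rw [hT, sum_inner]
    refine Finset.sum_congr rfl fun i _ => ?_
    rw [real_inner_smul_left, hcφ i x hxV hxr]
  have hTT : ∀ v w, ⟪T v, T w⟫ = ∑ i, ⟪(b i : EuclideanSpace ℝ (Fin n)), v⟫
      * ⟪(b i : EuclideanSpace ℝ (Fin n)), w⟫ := by
    intro v w
    rw [hT v, hT w, sum_inner]
    refine Finset.sum_congr rfl fun i _ => ?_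
    rw [real_inner_smul_left, inner_sum]
    simp only [real_inner_smul_right, hcc, mul_ite, mul_one, mul_zero]
    rw [Finset.sum_ite_eq]
    simp
  -- expansion of elements of V
  have hsum : ∀ x, x ∈ V → ⟪x, x⟫ = ∑ i, ⟪(b i : EuclideanSpace ℝ (Fin n)), x⟫
      * ⟪(b i : EuclideanSpace ℝ (Fin n)), x⟫ := by
    intro x hxV
    calc ⟪x, x⟫ = ⟪(⟨x, hxV⟩ : V), (⟨x, hxV⟩ : V)⟫ := by rw [Submodule.coe_inner]
      _ = ∑ i, ⟪(⟨x, hxV⟩ : V), b i⟫ * ⟪b i, (⟨x, hxV⟩ : V)⟫ :=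
          (b.sum_inner_mul_inner _ _).symm
      _ = ∑ i, ⟪(b i : EuclideanSpace ℝ (Fin n)), x⟫
          * ⟪(b i : EuclideanSpace ℝ (Fin n)), x⟫ := by
          refine Finset.sum_congr rfl fun i _ => ?_
          rw [real_inner_comm (⟨x, hxV⟩ : V) (b i), Submodule.coe_inner,
            real_inner_comm]
  -- φ agrees with T on the relative ball
  have hφT : ∀ x, x ∈ V → ‖x‖ < r → φ x = T x := by
    intro x hxV hxr
    have e1 : ⟪φ x, T x⟫ = ∑ i, ⟪(b i : EuclideanSpace ℝ (Fin n)), x⟫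
        * ⟪(b i : EuclideanSpace ℝ (Fin n)), x⟫ := by
      rw [real_inner_comm]; exact hTφ x x hxV hxr
    have e2 : ‖T x‖ ^ 2 = ∑ i, ⟪(b i : EuclideanSpace ℝ (Fin n)), x⟫
        * ⟪(b i : EuclideanSpace ℝ (Fin n)), x⟫ := by
      rw [← real_inner_self_eq_norm_sq]; exact hTT x x
    have e3 : ‖φ x‖ ^ 2 = ∑ i, ⟪(b i : EuclideanSpace ℝ (Fin n)), x⟫
        * ⟪(b i : EuclideanSpace ℝ (Fin n)), x⟫ := by
      rw [hφnorm x hxV hxr, ← real_inner_self_eq_norm_sq]; exact hsum x hxV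
    have key : ‖φ x - T x‖ ^ 2 = 0 := by
      rw [norm_sub_sq_real, e1, e2, e3]; ring
    have := pow_eq_zero_iff (n := 2) (by norm_num) |>.1 key
    rwa [norm_eq_zero, sub_eq_zero] at this
  -- T is isometric on V
  have hTnorm : ∀ v, v ∈ V → ‖T v‖ = ‖v‖ := by
    intro v hvV
    have e2 : ‖T v‖ ^ 2 = ∑ i, ⟪(b i : EuclideanSpace ℝ (Fin n)), v⟫
        * ⟪(b i : EuclideanSpace ℝ (Fin n)), v⟫ := by
      rw [← real_inner_self_eq_norm_sq]; exact hTT v v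
    have e3 : ‖v‖ ^ 2 = ∑ i, ⟪(b i : EuclideanSpace ℝ (Fin n)), v⟫
        * ⟪(b i : EuclideanSpace ℝ (Fin n)), v⟫ := by
      rw [← real_inner_self_eq_norm_sq]; exact hsum v hvV
    have h1 : ‖T v‖ = Real.sqrt (‖T v‖ ^ 2) := (Real.sqrt_sq (norm_nonneg _)).symm
    rw [h1, e2, ← e3, Real.sqrt_sq (norm_nonneg _)]
  -- T kills the orthogonal complement
  have hTperp : ∀ q, q ∈ Vᗮ → T q = 0 := by
    intro q hq
    rw [hT]
    have hz0 : ∀ i, ⟪(b i : EuclideanSpace ℝ (Fin n)), q⟫ = 0 := fun i =>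
      (Submodule.mem_orthogonal V q).1 hq _ (hbV i)
    simp [hz0]
  -- surjectivity of T restricted to V
  have hsurj : ∀ w : EuclideanSpace ℝ (Fin m), ∃ v, v ∈ V ∧ T v = w := by
    intro w
    let f : V →ₗ[ℝ] EuclideanSpace ℝ (Fin m) :=
      (T : EuclideanSpace ℝ (Fin n) →ₗ[ℝ] EuclideanSpace ℝ (Fin m)).comp V.subtype
    have hinj : Function.Injective f := by
      rw [← LinearMap.ker_eq_bot, LinearMap.ker_eq_bot']
      intro v hv
      have h0 : ‖T (v : EuclideanSpace ℝ (Fin n))‖ = 0 := by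
        simpa [f] using congrArg norm hv
      rw [hTnorm _ v.2, norm_eq_zero] at h0
      exact Subtype.ext h0
    have hfr : finrank ℝ V = finrank ℝ (EuclideanSpace ℝ (Fin m)) := by
      rw [hdim]
      simp [finrank_euclideanSpace_fin]
    have hsur : Function.Surjective f :=
      (LinearMap.injective_iff_surjective_of_finrank_eq_finrank hfr).1 hinj
    obtain ⟨v, hv⟩ := hsur w
    exact ⟨(v : EuclideanSpace ℝ (Fin n)), v.2, hv⟩
  -- main quantitative estimate
  have hest : ∀ h : EuclideanSpace ℝ (Fin n), ‖h‖ < r / 2 →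
      ‖u (z + h) - u z - T h‖ ≤ (2 / r) * ‖h‖ ^ 2 := by
    intro h hh
    set p : EuclideanSpace ℝ (Fin n) := (V.orthogonalProjectionOnto h : EuclideanSpace ℝ (Fin n))
      with hpdef
    have hpV : p ∈ V := (V.orthogonalProjectionOnto h).2
    set q : EuclideanSpace ℝ (Fin n) := h - p with hqdef
    have hqperp : q ∈ Vᗮ := V.sub_starProjection_mem_orthogonal h
    have hpq : ⟪p, q⟫ = 0 := (Submodule.mem_orthogonal V q).1 hqperp p hpV
    have hnormsq : ‖h‖ ^ 2 = ‖p‖ ^ 2 + ‖q‖ ^ 2 := by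
      have hpqe : h = p + q := by rw [hqdef]; abel
      rw [hpqe, norm_add_sq_real, hpq]
      ring
    have hpn : ‖p‖ ≤ ‖h‖ := by
      nlinarith [norm_nonneg p, norm_nonneg q, norm_nonneg h]
    have hqn : ‖q‖ ≤ ‖h‖ := by
      nlinarith [norm_nonneg p, norm_nonneg q, norm_nonneg h]
    have hThp : T h = T p := by
      have hq0 : T q = 0 := hTperp q hqperp
      have : T h - T p = 0 := by rw [← map_sub, ← hqdef, hq0]
      linear_combination (norm := abel) this
    obtain ⟨v, hvV, hTv⟩ := hsurj (φ h)
    have hgoal : u (z + h) - u z - T h = T (v - p) := by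
      rw [map_sub, hThp, show u (z + h) - u z = φ h from rfl, hTv]
    rw [hgoal, hTnorm _ (V.sub_mem hvV hpV)]
    -- bound ‖v - p‖
    by_cases hd : v - p = 0
    · rw [hd, norm_zero]
      positivity
    have hdpos : (0 : ℝ) < ‖v - p‖ := norm_pos_iff.2 hd
    set d : ℝ := ‖v - p‖ with hddef
    set t : ℝ := r / 4 with htdef
    have ht : 0 < t := by positivity
    set x : EuclideanSpace ℝ (Fin n) := p - (t / d) • (v - p) with hxdef
    have hxV : x ∈ V := V.sub_mem hpV (V.smul_mem _ (V.sub_mem hvV hpV))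
    have htd : ‖(t / d) • (v - p)‖ = t := by
      rw [norm_smul, Real.norm_eq_abs, abs_of_pos (by positivity), ← hddef]
      field_simp
    have hxn : ‖x‖ < r := by
      have h1 : ‖x‖ ≤ ‖p‖ + ‖(t / d) • (v - p)‖ := norm_sub_le _ _
      rw [htd] at h1
      have h2 : ‖p‖ < r / 2 := lt_of_le_of_lt hpn hh
      rw [htdef] at h1
      linarith
    have hvx : v - x = (1 + t / d) • (v - p) := by
      rw [hxdef, add_smul, one_smul]
      abel
    have hTvx : ‖T v - T x‖ = d + t := by
      rw [← map_sub, hTnorm _ (V.sub_mem hvV hxV), hvx, norm_smul,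
        Real.norm_eq_abs, abs_of_pos (by positivity), ← hddef]
      field_simp
    have hlip : ‖T v - T x‖ ≤ ‖h - x‖ := by
      rw [hTv, ← hφT x hxV hxn]
      have hld := hu.dist_le_mul (z + h) (z + x)
      rw [dist_eq_norm, dist_eq_norm] at hld
      have heq : (z + h) - (z + x) = h - x := by abel
      have heq2 : φ h - φ x = u (z + h) - u (z + x) := by
        simp only [hφdef]; abel
      rw [heq2]
      calc ‖u (z + h) - u (z + x)‖ ≤ 1 * ‖(z + h) - (z + x)‖ := hld
        _ = ‖h - x‖ := by rw [one_mul, heq]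
    have hhx : ‖h - x‖ ^ 2 = ‖q‖ ^ 2 + t ^ 2 := by
      have heq : h - x = q + (t / d) • (v - p) := by
        rw [hqdef, hxdef]; abel
      have hperp : ⟪q, (t / d) • (v - p)⟫ = 0 := by
        rw [real_inner_smul_right,
          (Submodule.mem_orthogonal' V q).1 hqperp _ (V.sub_mem hvV hpV), mul_zero]
      rw [heq, norm_add_sq_real, hperp, htd]
      ring
    have hkey : (d + t) ^ 2 ≤ ‖q‖ ^ 2 + t ^ 2 := by
      rw [← hhx, ← hTvx]
      have h1 : 0 ≤ ‖T v - T x‖ := norm_nonneg _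
      nlinarith [hlip, norm_nonneg (h - x)]
    have hdb : d ≤ ‖q‖ ^ 2 / (2 * t) := by
      rw [le_div_iff₀ (by positivity)]
      nlinarith
    calc d ≤ ‖q‖ ^ 2 / (2 * t) := hdb
      _ = (2 / r) * ‖q‖ ^ 2 := by rw [htdef]; field_simp; ring
      _ ≤ (2 / r) * ‖h‖ ^ 2 := by
          apply mul_le_mul_of_nonneg_left _ (by positivity)
          nlinarith [norm_nonneg q, norm_nonneg h]
  -- conclude differentiability
  have hderiv : HasFDerivAt u T z := by
    rw [hasFDerivAt_iff_isLittleO_nhds_zero]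
    have hbig : (fun h : EuclideanSpace ℝ (Fin n) => u (z + h) - u z - T h)
        =O[nhds 0] (fun h : EuclideanSpace ℝ (Fin n) => ‖h‖ ^ 2) := by
      apply IsBigO.of_bound (2 / r)
      have hev : ∀ᶠ h : EuclideanSpace ℝ (Fin n) in nhds 0, ‖h‖ < r / 2 := by
        filter_upwards [Metric.ball_mem_nhds (0 : EuclideanSpace ℝ (Fin n)) (half_pos hr)]
          with h hh
        simpa [mem_ball_zero_iff] using hh
      filter_upwards [hev] with h hh
      calc ‖u (z + h) - u z - T h‖ ≤ (2 / r) * ‖h‖ ^ 2 := hest h hh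
        _ = (2 / r) * ‖‖h‖ ^ 2‖ := by rw [Real.norm_of_nonneg (by positivity)]
    have hlittle : (fun h : EuclideanSpace ℝ (Fin n) => ‖h‖ ^ 2)
        =o[nhds 0] (fun h : EuclideanSpace ℝ (Fin n) => h) := by
      rw [Asymptotics.isLittleO_iff]
      intro cc hcc2
      filter_upwards [Metric.ball_mem_nhds (0 : EuclideanSpace ℝ (Fin n)) hcc2] with h hh
      rw [mem_ball_zero_iff] at hh
      have he : ‖‖h‖ ^ 2‖ = ‖h‖ * ‖h‖ := by
        rw [Real.norm_of_nonneg (by positivity)]; ring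
      rw [he]
      exact mul_le_mul_of_nonneg_right (le_of_lt hh) (norm_nonneg h)
    exact hbig.trans_isLittleO hlittle
  exact hderiv.differentiableAt
end

section
/- Let u : ℝⁿ → ℝᵐ be 1-Lipschitz and let S₁, S₂ be two distinct leaves of u. Then S₁ ∩ S₂ ⊆ ∂S₁ ∩ ∂S₂, where ∂Sᵢ denotes the relative boundary of the (closed convex) leaf Sᵢ. -/
section Aux

open Set

variable {E F : Type*} [NormedAddCommGroup E] [InnerProductSpace ℝ E]
  [NormedAddCommGroup F] [InnerProductSpace ℝ F]

/-- Pure algebra: rigidity of norms under the two-sided comparison. -/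
lemma alg_key {P q : F} {V W : E} {t : ℝ} (ht0 : 0 < t) (ht1 : t < 1)
    (hq : ‖q‖ = ‖W‖) (heq : ‖P - t • q‖ = ‖V - t • W‖)
    (hle : ‖P - q‖ ≤ ‖V - W‖) (hle0 : ‖P‖ ≤ ‖V‖) : ‖P‖ = ‖V‖ := by
  have hq2 : ‖q‖ ^ 2 = ‖W‖ ^ 2 := by rw [hq]
  have e1 : ‖P - t • q‖ ^ 2 = ‖V - t • W‖ ^ 2 := by rw [heq]
  rw [norm_sub_sq_real, norm_sub_sq_real, real_inner_smul_right, real_inner_smul_right,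
    norm_smul, norm_smul, Real.norm_eq_abs, abs_of_pos ht0] at e1
  have e2 : ‖P - q‖ ^ 2 ≤ ‖V - W‖ ^ 2 := by
    nlinarith [norm_nonneg (P - q), norm_nonneg (V - W)]
  rw [norm_sub_sq_real, norm_sub_sq_real] at e2
  have e3 : ‖P‖ ^ 2 ≤ ‖V‖ ^ 2 := by nlinarith [norm_nonneg P, norm_nonneg V]
  -- h4 : 2t(b - c) = ‖P‖² - ‖V‖²
  have h4 : 2 * t * ((inner ℝ P q : ℝ) - inner ℝ V W) = ‖P‖ ^ 2 - ‖V‖ ^ 2 := by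
    linear_combination (-1 : ℝ) * e1 + t ^ 2 * hq2
  have h5 : (inner ℝ P q : ℝ) - inner ℝ V W ≤ 0 := by nlinarith [h4, e3]
  have h6 : ‖P‖ ^ 2 - ‖V‖ ^ 2 ≤ 2 * ((inner ℝ P q : ℝ) - inner ℝ V W) := by
    linarith [e2, hq2]
  have hprod : 0 ≤ ((inner ℝ P q : ℝ) - inner ℝ V W) * (1 - t) := by nlinarith [h4, h6]
  have hB : (inner ℝ P q : ℝ) - inner ℝ V W = 0 := by nlinarith [hprod, h5, ht1]
  have key : ‖P‖ ^ 2 = ‖V‖ ^ 2 := by linear_combination (-1 : ℝ) * h4 + 2 * t * hB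
  refine le_antisymm hle0 ?_
  nlinarith [key, norm_nonneg P, norm_nonneg V]

lemma cross_eq {u : E → F} (hu : LipschitzWith 1 u) {z x x' y : E} {t : ℝ}
    (ht0 : 0 < t) (ht1 : t < 1) (hx : x = z + t • (x' - z))
    (hzx : ‖u x - u z‖ = ‖x - z‖) (hzx' : ‖u x' - u z‖ = ‖x' - z‖)
    (hxx' : ‖u x' - u x‖ = ‖x' - x‖) (hyx : ‖u y - u x‖ = ‖y - x‖) :
    ‖u y - u z‖ = ‖y - z‖ := by
  have hdist : ∀ a b : E, ‖u a - u b‖ ≤ ‖a - b‖ := by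
    intro a b
    simpa [dist_eq_norm] using hu.dist_le_mul a b
  have hxz : x - z = t • (x' - z) := by rw [hx]; module
  have hx'x : x' - x = (1 - t) • (x' - z) := by rw [hx]; module
  have hnp : ‖u x - u z‖ = t * ‖x' - z‖ := by
    rw [hzx, hxz, norm_smul, Real.norm_eq_abs, abs_of_pos ht0]
  have hnqp : ‖(u x' - u z) - (u x - u z)‖ = (1 - t) * ‖x' - z‖ := by
    have h : (u x' - u z) - (u x - u z) = u x' - u x := by abel
    rw [h, hxx', hx'x, norm_smul, Real.norm_eq_abs, abs_of_pos (by linarith)]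
  have hinner : (inner ℝ (u x - u z) (u x' - u z) : ℝ) = t * ‖x' - z‖ ^ 2 := by
    have h1 := norm_sub_sq_real (u x' - u z) (u x - u z)
    rw [hnqp, hzx', hnp, real_inner_comm (u x - u z) (u x' - u z)] at h1
    linear_combination h1 / 2
  have hpq : u x - u z = t • (u x' - u z) := by
    have h0 : ‖(u x - u z) - t • (u x' - u z)‖ ^ 2 = 0 := by
      rw [norm_sub_sq_real, real_inner_smul_right, hinner, norm_smul,
        Real.norm_eq_abs, abs_of_pos ht0, hnp, hzx']
      ring
    have h1 := (pow_eq_zero_iff two_ne_zero).mp h0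
    rw [norm_eq_zero, sub_eq_zero] at h1
    exact h1
  have huyx : u y - u x = (u y - u z) - t • (u x' - u z) := by rw [← hpq]; abel
  have hyxV : y - x = (y - z) - t • (x' - z) := by rw [hx]; abel
  have huyx' : u y - u x' = (u y - u z) - (u x' - u z) := by abel
  have hyx'V : y - x' = (y - z) - (x' - z) := by abel
  refine alg_key ht0 ht1 hzx' ?_ ?_ (hdist y z)
  · rw [← huyx, ← hyxV]; exact hyx
  · rw [← huyx', ← hyx'V]; exact hdist y x'

/-- A leaf of a `1`-Lipschitz map is closed. -/
lemma isLeaf_closed {n m : ℕ} {u : EuclideanSpace ℝ (Fin n) → EuclideanSpace ℝ (Fin m)}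
    (hu : LipschitzWith 1 u) {S : Set (EuclideanSpace ℝ (Fin n))} (hS : IsLeaf u S) :
    IsClosed S := by
  rw [← isSeqClosed_iff_isClosed]
  intro f y hf hfy
  by_contra hy
  obtain ⟨x, hxS, hlt⟩ := hS.2 y hy
  have hev : ∀ k, ‖u (f k) - u x‖ = ‖f k - x‖ := fun k => hS.1 (f k) (hf k) x hxS
  have h1 : Filter.Tendsto (fun k => ‖u (f k) - u x‖) Filter.atTop (nhds ‖u y - u x‖) := by
    exact ((hu.continuous.tendsto y).comp hfy |>.sub tendsto_const_nhds).norm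
  have h2 : Filter.Tendsto (fun k => ‖f k - x‖) Filter.atTop (nhds ‖y - x‖) := by
    exact (hfy.sub tendsto_const_nhds).norm
  have : ‖u y - u x‖ = ‖y - x‖ := by
    refine tendsto_nhds_unique ?_ h2
    simpa only [hev] using h1
  linarith

/-- From a point in the intrinsic interior one can extend any segment slightly. -/
lemma extend_in_interior {n : ℕ} {S : Set (EuclideanSpace ℝ (Fin n))}
    {x z : EuclideanSpace ℝ (Fin n)} (hx : x ∈ intrinsicInterior ℝ S) (hz : z ∈ S)
    (hzx : z ≠ x) : ∃ x' ∈ S, ∃ t : ℝ, 0 < t ∧ t < 1 ∧ x = z + t • (x' - z) := by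
  obtain ⟨y, hy, hyx⟩ := mem_intrinsicInterior.mp hx
  obtain ⟨δ, hδ, hball⟩ := Metric.isOpen_iff.mp isOpen_interior y hy
  have hxspan : x ∈ affineSpan ℝ S := hyx ▸ y.2
  have hzspan : z ∈ affineSpan ℝ S := subset_affineSpan ℝ S hz
  have hxz : (0:ℝ) < ‖x - z‖ := by
    rw [norm_pos_iff, sub_ne_zero]; exact (Ne.symm hzx)
  set ε : ℝ := δ / (2 * ‖x - z‖) with hε
  have hεpos : 0 < ε := by positivity
  set x' : EuclideanSpace ℝ (Fin n) := x + ε • (x - z) with hx'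
  have hx'span : x' ∈ affineSpan ℝ S := by
    have := AffineSubspace.smul_vsub_vadd_mem (affineSpan ℝ S) ε hxspan hzspan hxspan
    simpa [hx', vsub_eq_sub, vadd_eq_add, add_comm] using this
  have hx'mem : x' ∈ S := by
    have hdist : dist (⟨x', hx'span⟩ : affineSpan ℝ S) ⟨x, hxspan⟩ < δ := by
      rw [Subtype.dist_eq]
      simp only [dist_eq_norm]
      have : x' - x = ε • (x - z) := by rw [hx']; abel
      rw [this, norm_smul, Real.norm_eq_abs, abs_of_pos hεpos, hε]
      rw [div_mul_eq_mul_div, mul_comm]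
      rw [div_lt_iff₀ (by positivity)]
      nlinarith [hxz, hδ]
    have hyeq : (⟨x, hxspan⟩ : affineSpan ℝ S) = y := Subtype.ext hyx.symm
    have hmem : (⟨x', hx'span⟩ : affineSpan ℝ S) ∈ Metric.ball y δ := by
      rw [← hyeq]; exact Metric.mem_ball.mpr hdist
    exact (interior_subset (hball hmem) : (⟨x', hx'span⟩ : affineSpan ℝ S) ∈ Subtype.val ⁻¹' S)
  refine ⟨x', hx'mem, 1 / (1 + ε), by positivity, ?_, ?_⟩
  · rw [div_lt_one (by positivity)]; linarith
  · rw [hx']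
    have h1 : (1:ℝ) + ε ≠ 0 := by positivity
    rw [show x + ε • (x - z) - z = (1 + ε) • (x - z) by module]
    rw [smul_smul, one_div, inv_mul_cancel₀ h1, one_smul]
    abel

/-- A point of a closed set not in the intrinsic interior is in the intrinsic frontier. -/
lemma mem_intrinsicFrontier_of_not_interior {n : ℕ} {S : Set (EuclideanSpace ℝ (Fin n))}
    (hS : IsClosed S) {x : EuclideanSpace ℝ (Fin n)} (hx : x ∈ S)
    (hni : x ∉ intrinsicInterior ℝ S) : x ∈ intrinsicFrontier ℝ S := by
  have hxspan : x ∈ affineSpan ℝ S := subset_affineSpan ℝ S hx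
  refine mem_intrinsicFrontier.mpr ⟨⟨x, hxspan⟩, ?_, rfl⟩
  rw [frontier, mem_diff]
  constructor
  · exact subset_closure (by simpa using hx)
  · intro h
    exact hni (mem_intrinsicInterior.mpr ⟨⟨x, hxspan⟩, h, rfl⟩)

lemma leaf_meet_frontier {n m : ℕ} (u : EuclideanSpace ℝ (Fin n) → EuclideanSpace ℝ (Fin m))
    (hu : LipschitzWith 1 u) (S₁ S₂ : Set (EuclideanSpace ℝ (Fin n)))
    (hS₁ : IsLeaf u S₁) (hS₂ : IsLeaf u S₂) (hne : S₁ ≠ S₂)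
    {x : EuclideanSpace ℝ (Fin n)} (hx1 : x ∈ S₁) (hx2 : x ∈ S₂) :
    x ∈ intrinsicFrontier ℝ S₁ := by
  by_contra hnf
  have hint : x ∈ intrinsicInterior ℝ S₁ := by
    by_contra hni
    exact hnf (mem_intrinsicFrontier_of_not_interior (isLeaf_closed hu hS₁) hx1 hni)
  have claim : ∀ y ∈ S₂, ∀ z ∈ S₁, ‖u y - u z‖ = ‖y - z‖ := by
    intro y hy z hz
    by_cases hzx : z = x
    · subst hzx; exact hS₂.1 y hy z hx2
    · obtain ⟨x', hx', t, ht0, ht1, hxe⟩ := extend_in_interior hint hz hzx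
      exact cross_eq hu ht0 ht1 hxe (hS₁.1 x hx1 z hz) (hS₁.1 x' hx' z hz)
        (hS₁.1 x' hx' x hx1) (hS₂.1 y hy x hx2)
  apply hne
  ext w
  constructor
  · intro hw
    by_contra hw2
    obtain ⟨y, hy, hlt⟩ := hS₂.2 w hw2
    have := claim y hy w hw
    rw [norm_sub_rev y w, norm_sub_rev (u y) (u w)] at this
    linarith
  · intro hw
    by_contra hw1
    obtain ⟨z, hz, hlt⟩ := hS₁.2 w hw1
    have := claim w hw z hz
    linarith


end Aux

/-- Two distinct leaves of a `1`-Lipschitz map `u : ℝⁿ → ℝᵐ` can only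
meet along their relative boundaries: `S₁ ∩ S₂ ⊆ ∂S₁ ∩ ∂S₂`. -/
theorem stmt_8 {n m : ℕ} (u : EuclideanSpace ℝ (Fin n) → EuclideanSpace ℝ (Fin m))
    (hu : LipschitzWith 1 u)
    (S₁ S₂ : Set (EuclideanSpace ℝ (Fin n))) (hS₁ : IsLeaf u S₁) (hS₂ : IsLeaf u S₂)
    (hne : S₁ ≠ S₂) :
    S₁ ∩ S₂ ⊆ intrinsicFrontier ℝ S₁ ∩ intrinsicFrontier ℝ S₂ := by
  rintro x ⟨h1, h2⟩
  exact ⟨leaf_meet_frontier u hu S₁ S₂ hS₁ hS₂ hne h1 h2,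
    leaf_meet_frontier u hu S₂ S₁ hS₂ hS₁ hne.symm h2 h1⟩
end

section
/- Let u : ℝⁿ → ℝᵐ be 1-Lipschitz. If a point x₀ ∈ ℝⁿ belongs to at least two distinct leaves of u, then u is not (Fréchet) differentiable at x₀. -/
open scoped RealInnerProductSpace

/-- If `u` is 1-Lipschitz, differentiable at `x₀` with derivative `L`, and
`‖u z - u x₀‖ = ‖z - x₀‖`, then `L (z - x₀) = u z - u x₀`. -/
lemma key_deriv {n m : ℕ} {u : EuclideanSpace ℝ (Fin n) → EuclideanSpace ℝ (Fin m)}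
    (hu : LipschitzWith 1 u) {x₀ z : EuclideanSpace ℝ (Fin n)}
    {L : EuclideanSpace ℝ (Fin n) →L[ℝ] EuclideanSpace ℝ (Fin m)}
    (hL : HasFDerivAt u L x₀) (heq : ‖u z - u x₀‖ = ‖z - x₀‖) :
    L (z - x₀) = u z - u x₀ := by
  set v := z - x₀ with hv
  set c := u z - u x₀ with hc
  have hseg : ∀ t ∈ Set.Icc (0:ℝ) 1, u (x₀ + t • v) = u x₀ + t • c := by
    rintro t ⟨ht0, ht1⟩
    set a := u (x₀ + t • v) - u x₀ with ha
    have h1 : ‖a‖ ≤ t * ‖v‖ := by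
      have := hu.dist_le_mul (x₀ + t • v) x₀
      simp only [dist_eq_norm, NNReal.coe_one, one_mul, add_sub_cancel_left] at this
      simpa [norm_smul, abs_of_nonneg ht0] using this
    have h2 : ‖c - a‖ ≤ (1 - t) * ‖v‖ := by
      have := hu.dist_le_mul z (x₀ + t • v)
      simp only [dist_eq_norm, NNReal.coe_one, one_mul] at this
      have hz1 : z - (x₀ + t • v) = (1 - t) • v := by
        rw [sub_smul, one_smul, hv]; abel
      have hz2 : c - a = u z - u (x₀ + t • v) := by rw [hc, ha]; abel
      rw [hz1] at this
      calc ‖c - a‖ = ‖u z - u (x₀ + t • v)‖ := by rw [hz2]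
        _ ≤ ‖(1 - t) • v‖ := this
        _ = (1 - t) * ‖v‖ := by rw [norm_smul, Real.norm_eq_abs, abs_of_nonneg (by linarith)]
    have htri : ‖c‖ ≤ ‖c - a‖ + ‖a‖ := by
      simpa using norm_add_le (c - a) a
    have hcv : ‖c‖ = ‖v‖ := heq
    have hna : ‖a‖ = t * ‖v‖ := le_antisymm h1 (by linarith)
    have hnca : ‖c - a‖ = (1 - t) * ‖v‖ := le_antisymm h2 (by linarith)
    have e1 : ‖c - a‖ ^ 2 = ‖c‖ ^ 2 - 2 * ⟪c, a⟫ + ‖a‖ ^ 2 := norm_sub_sq_real c a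
    rw [hnca, hcv, hna] at e1
    have hinner : ⟪c, a⟫ = t * ‖v‖ ^ 2 := by nlinarith [e1]
    have e2 : ‖a - t • c‖ ^ 2 = ‖a‖ ^ 2 - 2 * ⟪a, t • c⟫ + ‖t • c‖ ^ 2 := norm_sub_sq_real a (t • c)
    have e3 : ⟪a, t • c⟫ = t * ⟪c, a⟫ := by rw [real_inner_smul_right, real_inner_comm]
    have e4 : ‖t • c‖ = t * ‖c‖ := by rw [norm_smul, Real.norm_eq_abs, abs_of_nonneg ht0]
    have hz : ‖a - t • c‖ ^ 2 = 0 := by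
      rw [e2, e3, e4, hinner, hna, hcv]; ring
    have hac : a = t • c := by
      have := pow_eq_zero_iff (n := 2) (by norm_num) |>.mp hz
      rwa [norm_eq_zero, sub_eq_zero] at this
    rw [ha] at hac
    linear_combination (norm := module) hac
  -- derivative of t ↦ u (x₀ + t • v) at 0 is L v
  have hpath : HasDerivAt (fun t : ℝ => x₀ + t • v) v 0 := by
    simpa using ((hasDerivAt_id (0:ℝ)).smul_const v).const_add x₀
  have hL' : HasFDerivAt u L (x₀ + (0:ℝ) • v) := by simp only [zero_smul, add_zero]; exact hL
  have hgd : HasDerivAt (fun t : ℝ => u (x₀ + t • v)) (L v) 0 := by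
    have := hL'.comp_hasDerivAt (x := (0:ℝ)) hpath
    exact this
  have h0 : HasDerivAt (fun t : ℝ => u x₀ + t • c) c 0 := by
    simpa using ((hasDerivAt_id (0:ℝ)).smul_const c).const_add (u x₀)
  have haff : HasDerivWithinAt (fun t : ℝ => u x₀ + t • c) c (Set.Icc 0 1) 0 :=
    h0.hasDerivWithinAt
  have h2 : HasDerivWithinAt (fun t : ℝ => u (x₀ + t • v)) c (Set.Icc 0 1) 0 := by
    refine haff.congr (fun t ht => hseg t ht) ?_
    exact hseg 0 ⟨le_refl _, zero_le_one⟩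
  have huniq : UniqueDiffWithinAt ℝ (Set.Icc (0:ℝ) 1) 0 :=
    uniqueDiffOn_Icc (by norm_num) 0 (by norm_num)
  exact huniq.eq_deriv _ (hgd.hasDerivWithinAt) h2

lemma leaf_aux {n m : ℕ} {u : EuclideanSpace ℝ (Fin n) → EuclideanSpace ℝ (Fin m)}
    (hu : LipschitzWith 1 u) {A B : Set (EuclideanSpace ℝ (Fin n))}
    (hA : IsLeaf u A) (hB : IsLeaf u B) {x₀ z : EuclideanSpace ℝ (Fin n)}
    (hx₀A : x₀ ∈ A) (hx₀B : x₀ ∈ B) (hzA : z ∈ A) (hzB : z ∉ B)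
    (hdiff : DifferentiableAt ℝ u x₀) : False := by
  obtain ⟨x, hxB, hlt⟩ := hB.2 z hzB
  have hL : HasFDerivAt u (fderiv ℝ u x₀) x₀ := hdiff.hasFDerivAt
  set L := fderiv ℝ u x₀ with hLdef
  have hLnorm : ‖L‖ ≤ 1 := by simpa using hL.le_of_lipschitz hu
  have ha : L (z - x₀) = u z - u x₀ := key_deriv hu hL (hA.1 z hzA x₀ hx₀A)
  have hb : L (x - x₀) = u x - u x₀ := key_deriv hu hL (hB.1 x hxB x₀ hx₀B)
  have hna : ‖L (z - x₀)‖ = ‖z - x₀‖ := by rw [ha]; exact hA.1 z hzA x₀ hx₀A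
  have hnb : ‖L (x - x₀)‖ = ‖x - x₀‖ := by rw [hb]; exact hB.1 x hxB x₀ hx₀B
  have hp : ‖L ((z - x₀) + (x - x₀))‖ ≤ ‖(z - x₀) + (x - x₀)‖ := by
    calc ‖L ((z - x₀) + (x - x₀))‖ ≤ ‖L‖ * ‖(z - x₀) + (x - x₀)‖ := L.le_opNorm _
      _ ≤ 1 * ‖(z - x₀) + (x - x₀)‖ := by
          exact mul_le_mul_of_nonneg_right hLnorm (norm_nonneg _)
      _ = ‖(z - x₀) + (x - x₀)‖ := one_mul _
  have hq : ‖L ((z - x₀) - (x - x₀))‖ ≤ ‖(z - x₀) - (x - x₀)‖ := by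
    calc ‖L ((z - x₀) - (x - x₀))‖ ≤ ‖L‖ * ‖(z - x₀) - (x - x₀)‖ := L.le_opNorm _
      _ ≤ 1 * ‖(z - x₀) - (x - x₀)‖ := by
          exact mul_le_mul_of_nonneg_right hLnorm (norm_nonneg _)
      _ = ‖(z - x₀) - (x - x₀)‖ := one_mul _
  have par1 := parallelogram_law_with_norm ℝ (L (z - x₀)) (L (x - x₀))
  have par2 := parallelogram_law_with_norm ℝ (z - x₀) (x - x₀)
  rw [← map_add, ← map_sub, hna, hnb] at par1
  have hX2 : ‖L ((z - x₀) + (x - x₀))‖ * ‖L ((z - x₀) + (x - x₀))‖ ≤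
      ‖(z - x₀) + (x - x₀)‖ * ‖(z - x₀) + (x - x₀)‖ :=
    mul_self_le_mul_self (norm_nonneg _) hp
  have hY2 : ‖(z - x₀) - (x - x₀)‖ * ‖(z - x₀) - (x - x₀)‖ ≤
      ‖L ((z - x₀) - (x - x₀))‖ * ‖L ((z - x₀) - (x - x₀))‖ := by linarith
  have hnn1 : (0:ℝ) ≤ ‖L ((z - x₀) - (x - x₀))‖ := norm_nonneg _
  have hnn2 : (0:ℝ) ≤ ‖(z - x₀) - (x - x₀)‖ := norm_nonneg _
  have hqe : ‖L ((z - x₀) - (x - x₀))‖ = ‖(z - x₀) - (x - x₀)‖ :=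
    le_antisymm hq (by nlinarith)
  have h3 : L ((z - x₀) - (x - x₀)) = u z - u x := by rw [map_sub, ha, hb]; abel
  have h4 : (z - x₀) - (x - x₀) = z - x := by abel
  rw [h3, h4] at hqe
  exact absurd hqe (ne_of_lt hlt)

/-- If a point `x₀ ∈ ℝⁿ` belongs to two distinct leaves of a
`1`-Lipschitz map `u : ℝⁿ → ℝᵐ`, then `u` is not Fréchet differentiable at `x₀`. -/
theorem stmt_9 {n m : ℕ} (u : EuclideanSpace ℝ (Fin n) → EuclideanSpace ℝ (Fin m))
    (hu : LipschitzWith 1 u)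
    (S₁ S₂ : Set (EuclideanSpace ℝ (Fin n))) (hS₁ : IsLeaf u S₁) (hS₂ : IsLeaf u S₂)
    (hne : S₁ ≠ S₂) (x₀ : EuclideanSpace ℝ (Fin n)) (hx₁ : x₀ ∈ S₁) (hx₂ : x₀ ∈ S₂) :
    ¬ DifferentiableAt ℝ u x₀ := by
  intro hdiff
  by_cases hsub : S₁ ⊆ S₂
  · have : ¬ S₂ ⊆ S₁ := fun h => hne (le_antisymm hsub h)
    obtain ⟨z, hz2, hz1⟩ := Set.not_subset.mp this
    exact leaf_aux hu hS₂ hS₁ hx₂ hx₁ hz2 hz1 hdiff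
  · obtain ⟨z, hz1, hz2⟩ := Set.not_subset.mp hsub
    exact leaf_aux hu hS₁ hS₂ hx₁ hx₂ hz1 hz2 hdiff
end

section
/- Let u : ℝⁿ → ℝᵐ be 1-Lipschitz and let B(u) denote the set of points of ℝⁿ that belong to at least two distinct leaves of u. Then B(u) has Lebesgue measure zero. -/
open MeasureTheory

section Aux

variable {E F : Type*} [NormedAddCommGroup E] [InnerProductSpace ℝ E]
  [NormedAddCommGroup F] [InnerProductSpace ℝ F]

/-- If a 1-Lipschitz map preserves the distance between `x` and `a`, it is affine on the
segment from `x` to `a`. -/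
lemma seg_eq_aux (u : E → F) (hu : LipschitzWith 1 u) {x a : E}
    (h : ‖u a - u x‖ = ‖a - x‖) {s : ℝ} (hs0 : 0 ≤ s) (hs1 : s ≤ 1) :
    u (x + s • (a - x)) = u x + s • (u a - u x) := by
  set z := x + s • (a - x) with hz
  have lip : ∀ p q : E, ‖u p - u q‖ ≤ ‖p - q‖ := by
    intro p q
    have := hu.dist_le_mul p q
    simpa [dist_eq_norm] using this
  have hzx : z - x = s • (a - x) := by simp [hz]
  have haz : a - z = (1 - s) • (a - x) := by
    rw [hz]; module
  have h1 : ‖u z - u x‖ ≤ s * ‖a - x‖ := by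
    calc ‖u z - u x‖ ≤ ‖z - x‖ := lip z x
    _ = s * ‖a - x‖ := by rw [hzx, norm_smul]; simp [abs_of_nonneg hs0]
  have h2 : ‖u a - u z‖ ≤ (1 - s) * ‖a - x‖ := by
    calc ‖u a - u z‖ ≤ ‖a - z‖ := lip a z
    _ = (1 - s) * ‖a - x‖ := by
        rw [haz, norm_smul]; simp [abs_of_nonneg (by linarith : (0:ℝ) ≤ 1 - s)]
  have h3 : ‖a - x‖ ≤ ‖u a - u z‖ + ‖u z - u x‖ := by
    calc ‖a - x‖ = ‖u a - u x‖ := h.symm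
    _ = ‖(u a - u z) + (u z - u x)‖ := by abel_nf
    _ ≤ ‖u a - u z‖ + ‖u z - u x‖ := norm_add_le _ _
  have e1 : ‖u z - u x‖ = s * ‖a - x‖ := by nlinarith
  have e2 : ‖u a - u z‖ = (1 - s) * ‖a - x‖ := by nlinarith
  -- equality in the triangle inequality
  set P := u a - u z with hP
  set Q := u z - u x with hQ
  have hPQ : P + Q = u a - u x := by rw [hP, hQ]; abel
  have e3 : ‖P + Q‖ = ‖P‖ + ‖Q‖ := by
    rw [hPQ, h, e1, e2]; ring
  have hinner : (inner ℝ P Q : ℝ) = ‖P‖ * ‖Q‖ := by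
    have := norm_add_sq_real P Q
    rw [e3] at this
    nlinarith
  have hn : ‖Q - s • (P + Q)‖ ^ 2 = 0 := by
    have expand : ‖Q - s • (P + Q)‖ ^ 2
        = ‖Q‖ ^ 2 - 2 * (s * inner ℝ Q (P + Q)) + s ^ 2 * ‖P + Q‖ ^ 2 := by
      rw [norm_sub_sq_real, real_inner_smul_right, norm_smul]
      simp only [Real.norm_eq_abs, abs_of_nonneg hs0]
      ring
    have hQP : (inner ℝ Q (P + Q) : ℝ) = ‖P‖ * ‖Q‖ + ‖Q‖ ^ 2 := by
      rw [inner_add_right, real_inner_self_eq_norm_sq, real_inner_comm, hinner]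
    have hPQnorm : ‖P + Q‖ = ‖a - x‖ := by rw [hPQ, h]
    rw [expand, hQP, hPQnorm, e1, e2]
    ring
  have key : Q = s • (P + Q) :=
    sub_eq_zero.mp (norm_eq_zero.mp (pow_eq_zero_iff two_ne_zero |>.mp hn))
  rw [hPQ] at key
  rw [hQ] at key
  rw [sub_eq_iff_eq_add'] at key
  exact key

/-- If `u` is affine on the segment from `x` in direction `v` and differentiable at `x`,
its derivative sends `v` to the corresponding increment. -/
lemma deriv_eq_aux (u : E → F) {x v : E} {p : F} (hd : DifferentiableAt ℝ u x)
    (h : ∀ s : ℝ, 0 ≤ s → s ≤ 1 → u (x + s • v) = u x + s • p) :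
    fderiv ℝ u x v = p := by
  have line : HasDerivAt (fun s : ℝ => x + s • v) v 0 := by
    have : HasDerivAt (fun s : ℝ => s • v) ((1:ℝ) • v) 0 :=
      (hasDerivAt_id (0:ℝ)).smul_const v
    simpa using this.const_add x
  have hφ : HasDerivAt (fun s : ℝ => u (x + s • v)) (fderiv ℝ u x v) 0 := by
    have hD : HasFDerivAt u (fderiv ℝ u x) (x + (0:ℝ) • v) := by
      simpa using hd.hasFDerivAt
    exact hD.comp_hasDerivAt 0 line
  have hψ : HasDerivAt (fun s : ℝ => u x + s • p) p 0 := by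
    have : HasDerivAt (fun s : ℝ => s • p) ((1:ℝ) • p) 0 :=
      (hasDerivAt_id (0:ℝ)).smul_const p
    simpa using this.const_add (u x)
  have hφ' : HasDerivWithinAt (fun s : ℝ => u (x + s • v)) (fderiv ℝ u x v)
      (Set.Icc (0:ℝ) 1) 0 := hφ.hasDerivWithinAt
  have hψ' : HasDerivWithinAt (fun s : ℝ => u (x + s • v)) p (Set.Icc (0:ℝ) 1) 0 := by
    refine (hψ.hasDerivWithinAt).congr (fun s hs => h s hs.1 hs.2) ?_
    simp [h 0 le_rfl zero_le_one]
  exact UniqueDiffWithinAt.eq_deriv _ (uniqueDiffOn_Icc_zero_one 0 ⟨le_rfl, zero_le_one⟩)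
    hφ' hψ'

set_option maxHeartbeats 1000000 in
/-- At a branching point, `u` cannot be differentiable. -/
lemma branch_not_diff {u : E → F} (hu : LipschitzWith 1 u) {x a b : E}
    (ha : ‖u a - u x‖ = ‖a - x‖) (hb : ‖u b - u x‖ = ‖b - x‖)
    (hab : ‖u a - u b‖ < ‖a - b‖) : ¬ DifferentiableAt ℝ u x := by
  intro hd
  set D := fderiv ℝ u x with hD
  have hDv : D (a - x) = u a - u x := by
    apply deriv_eq_aux u hd
    intro s h0 h1
    simpa using seg_eq_aux u hu ha h0 h1
  have hDw : D (b - x) = u b - u x := by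
    apply deriv_eq_aux u hd
    intro s h0 h1
    simpa using seg_eq_aux u hu hb h0 h1
  have hDnorm : ‖D‖ ≤ 1 := by
    have := hd.hasFDerivAt.le_of_lipschitz hu
    simpa using this
  set p := u a - u x with hp'
  set q := u b - u x with hq'
  set v := a - x with hv'
  set w := b - x with hw'
  have hp : ‖p‖ = ‖v‖ := ha
  have hq : ‖q‖ = ‖w‖ := hb
  have hsum : ‖p + q‖ ≤ ‖v + w‖ := by
    have : D (v + w) = p + q := by rw [map_add, hDv, hDw]
    calc ‖p + q‖ = ‖D (v + w)‖ := by rw [this]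
    _ ≤ ‖D‖ * ‖v + w‖ := D.le_opNorm _
    _ ≤ 1 * ‖v + w‖ := by
        exact mul_le_mul_of_nonneg_right hDnorm (norm_nonneg _)
    _ = ‖v + w‖ := one_mul _
  have hab' : ‖p - q‖ < ‖v - w‖ := by
    have h1 : u a - u b = p - q := by rw [hp', hq']; abel
    have h2 : a - b = v - w := by rw [hv', hw']; abel
    rwa [h1, h2] at hab
  have e1 := norm_add_sq_real p q
  have e2 := norm_add_sq_real v w
  have e3 := norm_sub_sq_real p q
  have e4 := norm_sub_sq_real v w
  have s1 : ‖p + q‖ ^ 2 ≤ ‖v + w‖ ^ 2 := by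
    nlinarith [norm_nonneg (p + q), norm_nonneg (v + w)]
  have hp2 : ‖p‖ ^ 2 = ‖v‖ ^ 2 := by rw [hp]
  have hq2 : ‖q‖ ^ 2 = ‖w‖ ^ 2 := by rw [hq]
  have s2 : (inner ℝ p q : ℝ) ≤ inner ℝ v w := by linarith
  have s3 : ‖v - w‖ ^ 2 ≤ ‖p - q‖ ^ 2 := by linarith
  nlinarith [norm_nonneg (p - q), norm_nonneg (v - w)]

end Aux

/-- The set `B(u)` of points of `ℝⁿ` belonging to at least two distinct
leaves of a `1`-Lipschitz map `u : ℝⁿ → ℝᵐ` has Lebesgue measure zero. -/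
theorem stmt_10 {n m : ℕ} (u : EuclideanSpace ℝ (Fin n) → EuclideanSpace ℝ (Fin m))
    (hu : LipschitzWith 1 u) :
    volume {x : EuclideanSpace ℝ (Fin n) |
      ∃ S₁ S₂ : Set (EuclideanSpace ℝ (Fin n)),
        IsLeaf u S₁ ∧ IsLeaf u S₂ ∧ S₁ ≠ S₂ ∧ x ∈ S₁ ∧ x ∈ S₂} = 0 := by
  have key : {x : EuclideanSpace ℝ (Fin n) |
      ∃ S₁ S₂ : Set (EuclideanSpace ℝ (Fin n)),
        IsLeaf u S₁ ∧ IsLeaf u S₂ ∧ S₁ ≠ S₂ ∧ x ∈ S₁ ∧ x ∈ S₂}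
      ⊆ {x | ¬ DifferentiableAt ℝ u x} := by
    rintro x ⟨S₁, S₂, ⟨h1iso, h1max⟩, ⟨h2iso, h2max⟩, hne, hx1, hx2⟩
    have main : ∀ (T₁ T₂ : Set (EuclideanSpace ℝ (Fin n))),
        (∀ x ∈ T₁, ∀ y ∈ T₁, ‖u x - u y‖ = ‖x - y‖) →
        (∀ x ∈ T₂, ∀ y ∈ T₂, ‖u x - u y‖ = ‖x - y‖) →
        (∀ y ∉ T₂, ∃ x ∈ T₂, ‖u y - u x‖ < ‖y - x‖) →
        x ∈ T₁ → x ∈ T₂ → ¬ T₁ ⊆ T₂ → ¬ DifferentiableAt ℝ u x := by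
      intro T₁ T₂ hT1 hT2 hT2max hx1 hx2 hsub
      obtain ⟨a, ha1, ha2⟩ := Set.not_subset.mp hsub
      obtain ⟨b, hb2, hab⟩ := hT2max a ha2
      exact branch_not_diff hu (hT1 a ha1 x hx1) (hT2 b hb2 x hx2) hab
    by_cases hsub : S₁ ⊆ S₂
    · have hsub' : ¬ S₂ ⊆ S₁ := fun h' => hne (Set.Subset.antisymm hsub h')
      exact main S₂ S₁ h2iso h1iso h1max hx2 hx1 hsub'
    · exact main S₁ S₂ h1iso h2iso h2max hx1 hx2 hsub
  apply measure_mono_null key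
  have h0 : ∀ᵐ x ∂(volume : Measure (EuclideanSpace ℝ (Fin n))),
      DifferentiableAt ℝ u x := hu.ae_differentiableAt
  simpa [ae_iff] using h0
end

section
/- Let m ≤ n, let u : ℝⁿ → ℝᵐ be Lipschitz, let s ∈ ℝᵐ and let S_s = {x ∈ ℝⁿ : u(x) = s}. Then the set S_s ∩ {x : u is differentiable at x and Du(x) has maximal rank m} admits a countable covering (S_s^i)_{i∈ℕ} by bounded Borel sets such that for each i there exist Lipschitz maps w : ℝⁿ → ℝ^{n−m} and v : ℝ^{n−m} → ℝⁿ with v(w(x)) = x for every x ∈ S_s^i. -/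
set_option maxHeartbeats 1000000
set_option synthInstance.maxHeartbeats 400000

open Set Metric

private lemma aux_left_inverse {n k : ℕ}
    (w : EuclideanSpace ℝ (Fin n) → EuclideanSpace ℝ (Fin k))
    (E : Set (EuclideanSpace ℝ (Fin n)))
    (hbl : ∀ x ∈ E, ∀ y ∈ E, ‖x - y‖ ≤ 2 * ‖w x - w y‖) :
    ∃ v : EuclideanSpace ℝ (Fin k) → EuclideanSpace ℝ (Fin n),
      (∃ Kv : NNReal, LipschitzWith Kv v) ∧ ∀ x ∈ E, v (w x) = x := by
  classical
  have hinj : Set.InjOn w E := by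
    intro x hx y hy hxy
    have h1 := hbl x hx y hy
    rw [hxy, sub_self, norm_zero, mul_zero] at h1
    exact sub_eq_zero.mp (norm_le_zero_iff.mp h1)
  set g := Function.invFunOn w E with hg
  have hg1 : ∀ x ∈ E, g (w x) = x := hinj.leftInvOn_invFunOn
  have hlip : LipschitzOnWith 2 g (w '' E) := by
    rw [lipschitzOnWith_iff_dist_le_mul]
    rintro p ⟨x, hx, rfl⟩ q ⟨y, hy, rfl⟩
    rw [hg1 x hx, hg1 y hy, dist_eq_norm, dist_eq_norm]
    have := hbl x hx y hy
    push_cast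
    linarith
  let e : EuclideanSpace ℝ (Fin n) ≃L[ℝ] (Fin n → ℝ) := EuclideanSpace.equiv (Fin n) ℝ
  have hlip2 : LipschitzOnWith (‖(e : EuclideanSpace ℝ (Fin n) →L[ℝ] (Fin n → ℝ))‖₊ * 2)
      (fun p => e (g p)) (w '' E) :=
    (e : EuclideanSpace ℝ (Fin n) →L[ℝ] (Fin n → ℝ)).lipschitz.comp_lipschitzOnWith hlip
  obtain ⟨G, hG, hEq⟩ := hlip2.extend_pi
  refine ⟨fun p => e.symm (G p), ⟨_,
    (e.symm : (Fin n → ℝ) →L[ℝ] EuclideanSpace ℝ (Fin n)).lipschitz.comp hG⟩, ?_⟩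
  intro x hx
  have hmem : w x ∈ w '' E := ⟨x, hx, rfl⟩
  have h2 : G (w x) = e (g (w x)) := (hEq hmem).symm
  show e.symm (G (w x)) = x
  rw [h2, ContinuousLinearEquiv.symm_apply_apply, hg1 x hx]

/-- Let `m ≤ n`, let `u : ℝⁿ → ℝᵐ` be Lipschitz, and let
`S_s = {x : u x = s}` be a level set.  Then the portion of `S_s` consisting of points
where `u` is differentiable with derivative of maximal rank `m` admits a countable
covering by bounded Borel sets `S_s^i` such that for each `i` there are Lipschitz maps
`w : ℝⁿ → ℝ^{n−m}` and `v : ℝ^{n−m} → ℝⁿ` with `v (w x) = x` for every `x ∈ S_s^i`. -/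
theorem stmt_11 {n m : ℕ} (hmn : m ≤ n)
    (u : EuclideanSpace ℝ (Fin n) → EuclideanSpace ℝ (Fin m))
    (K : NNReal) (hu : LipschitzWith K u) (s : EuclideanSpace ℝ (Fin m)) :
    ∃ C : ℕ → Set (EuclideanSpace ℝ (Fin n)),
      ({x | u x = s} ∩
          {x | DifferentiableAt ℝ u x ∧ LinearMap.range (fderiv ℝ u x).toLinearMap = ⊤} ⊆
        ⋃ i, C i) ∧
      ∀ i, MeasurableSet (C i) ∧ Bornology.IsBounded (C i) ∧
        ∃ w : EuclideanSpace ℝ (Fin n) → EuclideanSpace ℝ (Fin (n - m)),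
        ∃ v : EuclideanSpace ℝ (Fin (n - m)) → EuclideanSpace ℝ (Fin n),
          (∃ Kw : NNReal, LipschitzWith Kw w) ∧
          (∃ Kv : NNReal, LipschitzWith Kv v) ∧
          ∀ x ∈ C i, v (w x) = x := by
  classical
  obtain ⟨D, hDc, hDd⟩ := TopologicalSpace.exists_countable_dense
    (EuclideanSpace ℝ (Fin (n - m)) →L[ℝ] EuclideanSpace ℝ (Fin n))
  obtain ⟨Z, hZc, hZd⟩ := TopologicalSpace.exists_countable_dense (EuclideanSpace ℝ (Fin n))
  let Efun : (EuclideanSpace ℝ (Fin (n - m)) →L[ℝ] EuclideanSpace ℝ (Fin n)) → ℕ →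
      EuclideanSpace ℝ (Fin n) → Set (EuclideanSpace ℝ (Fin n)) :=
    fun φ j z => {x | u x = s ∧ ‖x - z‖ ≤ 1 / (2 * (j + 1)) ∧
      ∀ x', u x' = s → ‖x' - x‖ ≤ 1 / (j + 1) →
        ‖x' - x‖ ≤ 2 * ‖ContinuousLinearMap.adjoint φ (x' - x)‖}
  haveI : Countable D := hDc.to_subtype
  haveI : Countable Z := hZc.to_subtype
  haveI : Nonempty D := (hDd.nonempty).to_subtype
  haveI : Nonempty Z := (hZd.nonempty).to_subtype
  obtain ⟨f, hf⟩ := exists_surjective_nat (↥D × ℕ × ↥Z)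
  refine ⟨fun i => closure (Efun ((f i).1 : _) (f i).2.1 ((f i).2.2 : _)), ?_, ?_⟩
  · -- covering
    rintro x ⟨hxs, hdiff, hrank⟩
    simp only [Set.mem_setOf_eq] at hxs hdiff hrank
    set L := fderiv ℝ u x with hL
    set V := LinearMap.ker (L : EuclideanSpace ℝ (Fin n) →ₗ[ℝ] EuclideanSpace ℝ (Fin m)) with hV
    -- dimension counting
    have hdimV : Module.finrank ℝ V = n - m := by
      have h1 := LinearMap.finrank_range_add_finrank_ker
        (L : EuclideanSpace ℝ (Fin n) →ₗ[ℝ] EuclideanSpace ℝ (Fin m))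
      rw [show LinearMap.range (L : EuclideanSpace ℝ (Fin n) →ₗ[ℝ] EuclideanSpace ℝ (Fin m)) = ⊤
        from hrank] at h1
      simp only [finrank_top, finrank_euclideanSpace_fin] at h1
      have h1' : LinearMap.ker (L : EuclideanSpace ℝ (Fin n) →ₗ[ℝ] EuclideanSpace ℝ (Fin m)) = V :=
        rfl
      rw [h1'] at h1
      omega
    have hdimVc : Module.finrank ℝ (Vᗮ : Submodule ℝ (EuclideanSpace ℝ (Fin n))) = m := by
      have h2 := Submodule.finrank_add_finrank_orthogonal (K := V)
      rw [hdimV, finrank_euclideanSpace_fin] at h2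
      omega
    -- L is injective on Vᗮ, with antilipschitz constant
    let L₁ : (Vᗮ : Submodule ℝ (EuclideanSpace ℝ (Fin n))) →ₗ[ℝ] EuclideanSpace ℝ (Fin m) :=
      (L : EuclideanSpace ℝ (Fin n) →ₗ[ℝ] EuclideanSpace ℝ (Fin m)).comp (Vᗮ.subtype)
    have hL₁inj : Function.Injective L₁ := by
      intro y y' hyy
      have hmem : (y : EuclideanSpace ℝ (Fin n)) - y' ∈ V := by
        apply LinearMap.mem_ker.mpr
        show L ((y : EuclideanSpace ℝ (Fin n)) - y') = 0
        rw [map_sub]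
        show L₁ y - L₁ y' = 0
        rw [hyy, sub_self]
      have hmem2 : (y : EuclideanSpace ℝ (Fin n)) - y' ∈ Vᗮ := sub_mem y.2 y'.2
      have h4 := (Submodule.mem_orthogonal _ _).mp hmem2 _ hmem
      exact Subtype.ext (sub_eq_zero.mp (inner_self_eq_zero.mp h4))
    let eL : (Vᗮ : Submodule ℝ (EuclideanSpace ℝ (Fin n))) ≃ₗ[ℝ] EuclideanSpace ℝ (Fin m) :=
      LinearMap.linearEquivOfInjective L₁ hL₁inj (by rw [hdimVc, finrank_euclideanSpace_fin])
    let ceL := eL.toContinuousLinearEquiv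
    obtain ⟨K₀', hanti⟩ : ∃ K' : NNReal, AntilipschitzWith K' ceL := ⟨_, ceL.antilipschitz⟩
    set K₀ : ℝ := (K₀' : ℝ) with hK₀
    have hK₀0 : 0 ≤ K₀ := K₀'.coe_nonneg
    have hantib : ∀ y : (Vᗮ : Submodule ℝ (EuclideanSpace ℝ (Fin n))),
        ‖(y : EuclideanSpace ℝ (Fin n))‖ ≤ K₀ * ‖L (y : EuclideanSpace ℝ (Fin n))‖ := by
      intro y
      have h2 : (ceL y : EuclideanSpace ℝ (Fin m)) = L (y : EuclideanSpace ℝ (Fin n)) := by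
        show (eL y : EuclideanSpace ℝ (Fin m)) = _
        rw [LinearMap.linearEquivOfInjective_apply]
        rfl
      have h1 := hanti.le_mul_dist y 0
      simp only [map_zero, dist_zero_right] at h1
      have h1' : ‖y‖ ≤ K₀ * ‖(ceL y : EuclideanSpace ℝ (Fin m))‖ := h1
      rw [h2] at h1'
      exact h1'
    set c : ℝ := K₀ + 1 with hc
    have hc1 : 1 ≤ c := by linarith
    have hc0 : 0 < c := by linarith
    have hantic : ∀ y : (Vᗮ : Submodule ℝ (EuclideanSpace ℝ (Fin n))),
        ‖(y : EuclideanSpace ℝ (Fin n))‖ ≤ c * ‖L (y : EuclideanSpace ℝ (Fin n))‖ := by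
      intro y
      have := hantib y
      nlinarith [norm_nonneg (L (y : EuclideanSpace ℝ (Fin n)))]
    -- differentiability: little-o estimate
    set ε : ℝ := 1 / (8 * c) with hε
    have hε0 : 0 < ε := by positivity
    have hlo := (hdiff.hasFDerivAt.isLittleO).def hε0
    rw [Metric.eventually_nhds_iff] at hlo
    obtain ⟨δ, hδ0, hδ⟩ := hlo
    obtain ⟨j, hj⟩ := exists_nat_one_div_lt (K := ℝ) hδ0
    -- the model isometry ψ onto V
    have hfr : Fin (Module.finrank ℝ V) ≃ Fin (n - m) := finCongr hdimV
    let B := (stdOrthonormalBasis ℝ V).reindex hfr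
    let ψ : EuclideanSpace ℝ (Fin (n - m)) →L[ℝ] EuclideanSpace ℝ (Fin n) :=
      V.subtypeL.comp (B.repr.symm.toLinearIsometry.toContinuousLinearMap)
    have hψa : ∀ t, ψ t = ((B.repr.symm t : V) : EuclideanSpace ℝ (Fin n)) := fun t => rfl
    -- pick φ and z
    obtain ⟨φ, hφD, hφ⟩ := hDd.exists_dist_lt ψ (by norm_num : (0:ℝ) < 1/8)
    obtain ⟨z, hzZ, hz⟩ := hZd.exists_dist_lt x
      (by positivity : (0:ℝ) < 1 / (2 * (j + 1)))
    refine Set.mem_iUnion.mpr ?_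
    obtain ⟨i, hi⟩ := hf (⟨φ, hφD⟩, j, ⟨z, hzZ⟩)
    refine ⟨i, ?_⟩
    rw [hi]
    refine subset_closure ?_
    refine ⟨hxs, ?_, ?_⟩
    · rw [← dist_eq_norm]; exact hz.le
    -- the key estimate
    intro x' hx's hnear
    set h : EuclideanSpace ℝ (Fin n) := x' - x with hh
    rcases eq_or_ne h 0 with h0 | h0
    · rw [h0]; simp
    have hnorm0 : 0 < ‖h‖ := norm_pos_iff.mpr h0
    -- ‖L h‖ ≤ ε ‖h‖
    have hLh : ‖L h‖ ≤ ε * ‖h‖ := by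
      have hd : dist x' x < δ := by
        rw [dist_eq_norm]
        exact lt_of_le_of_lt hnear hj
      have := hδ hd
      rw [hx's, hxs, sub_self, zero_sub, norm_neg] at this
      exact this
    -- decompose h
    set a : V := V.orthogonalProjectionOnto h with ha
    set b : EuclideanSpace ℝ (Fin n) := h - a with hb
    have hbmem : b ∈ Vᗮ := V.sub_starProjection_mem_orthogonal h
    have hLb : L b = L h := by
      have haker : L (a : EuclideanSpace ℝ (Fin n)) = 0 := a.2
      rw [hb, map_sub, haker, sub_zero]
    have hbnorm : ‖b‖ ≤ ‖h‖ / 8 := by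
      have := hantic ⟨b, hbmem⟩
      simp only [Submodule.coe_mk] at this
      rw [hLb] at this
      calc ‖b‖ ≤ c * ‖L h‖ := this
        _ ≤ c * (ε * ‖h‖) := by
            apply mul_le_mul_of_nonneg_left hLh hc0.le
        _ = ‖h‖ / 8 := by rw [hε]; field_simp
    have hanorm : ‖(a : EuclideanSpace ℝ (Fin n))‖ ≥ ‖h‖ - ‖b‖ := by
      have h5 : (a : EuclideanSpace ℝ (Fin n)) = h - b := by rw [hb]; abel
      rw [h5]
      linarith [norm_sub_norm_le h b]
    -- the adjoint of ψ estimate via inner products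
    set t : EuclideanSpace ℝ (Fin (n - m)) := B.repr a with ht
    have hψt : ψ t = (a : EuclideanSpace ℝ (Fin n)) := by
      rw [hψa, ht]
      simp
    have htnorm : ‖t‖ = ‖(a : EuclideanSpace ℝ (Fin n))‖ := by
      rw [ht]
      rw [LinearIsometryEquiv.norm_map]
      rfl
    have hinner : (inner ℝ (ContinuousLinearMap.adjoint ψ h) t : ℝ)
        = ‖(a : EuclideanSpace ℝ (Fin n))‖ ^ 2 := by
      rw [ContinuousLinearMap.adjoint_inner_left, hψt]
      have hdecomp : h = (a : EuclideanSpace ℝ (Fin n)) + b := by rw [hb]; abel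
      rw [hdecomp, inner_add_left]
      have hba : (inner ℝ b (a : EuclideanSpace ℝ (Fin n)) : ℝ) = 0 := by
        have := (Submodule.mem_orthogonal _ _).mp hbmem _ a.2
        rw [real_inner_comm] at this
        exact this
      rw [hba, add_zero, real_inner_self_eq_norm_sq]
    have hψadj : ‖ContinuousLinearMap.adjoint ψ h‖ ≥ ‖(a : EuclideanSpace ℝ (Fin n))‖ := by
      rcases eq_or_lt_of_le (norm_nonneg (a : EuclideanSpace ℝ (Fin n))) with h5 | h5
      · linarith [norm_nonneg (ContinuousLinearMap.adjoint ψ h)]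
      · have hcs := real_inner_le_norm (ContinuousLinearMap.adjoint ψ h) t
        rw [hinner, htnorm] at hcs
        nlinarith
    -- transfer to φ
    have hφψ : ‖ContinuousLinearMap.adjoint φ h - ContinuousLinearMap.adjoint ψ h‖
        ≤ (1/8) * ‖h‖ := by
      have : ContinuousLinearMap.adjoint φ h - ContinuousLinearMap.adjoint ψ h
          = (ContinuousLinearMap.adjoint φ - ContinuousLinearMap.adjoint ψ) h := rfl
      rw [this]
      calc ‖(ContinuousLinearMap.adjoint φ - ContinuousLinearMap.adjoint ψ) h‖
          ≤ ‖ContinuousLinearMap.adjoint φ - ContinuousLinearMap.adjoint ψ‖ * ‖h‖ :=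
            (ContinuousLinearMap.adjoint φ - ContinuousLinearMap.adjoint ψ).le_opNorm h
        _ ≤ (1/8) * ‖h‖ := by
            apply mul_le_mul_of_nonneg_right _ (norm_nonneg h)
            have : ContinuousLinearMap.adjoint φ - ContinuousLinearMap.adjoint ψ
                = ContinuousLinearMap.adjoint (φ - ψ) := (map_sub _ _ _).symm
            rw [this, LinearIsometryEquiv.norm_map, norm_sub_rev]
            rw [dist_eq_norm] at hφ
            exact hφ.le
    have hfinal : ‖ContinuousLinearMap.adjoint φ h‖ ≥ (1/2) * ‖h‖ := by
      have h6 := norm_sub_norm_le (ContinuousLinearMap.adjoint ψ h)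
        (ContinuousLinearMap.adjoint φ h)
      have hrev := norm_sub_rev (ContinuousLinearMap.adjoint ψ h)
        (ContinuousLinearMap.adjoint φ h)
      linarith
    linarith
  · -- properties of each piece
    intro i
    set φ : EuclideanSpace ℝ (Fin (n - m)) →L[ℝ] EuclideanSpace ℝ (Fin n) :=
      ((f i).1 : EuclideanSpace ℝ (Fin (n - m)) →L[ℝ] EuclideanSpace ℝ (Fin n)) with hφdef
    set j : ℕ := (f i).2.1 with hjdef
    set z : EuclideanSpace ℝ (Fin n) := ((f i).2.2 : EuclideanSpace ℝ (Fin n)) with hzdef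
    refine ⟨isClosed_closure.measurableSet, ?_, ?_⟩
    · apply Bornology.IsBounded.subset (isBounded_closedBall (x := z) (r := 1 / (2 * (j + 1))))
      apply closure_minimal _ isClosed_closedBall
      rintro y ⟨-, hy, -⟩
      rw [mem_closedBall, dist_eq_norm]
      exact hy
    · set E := Efun φ j z with hE
      have hbl : ∀ x ∈ E, ∀ y ∈ E,
          ‖x - y‖ ≤ 2 * ‖ContinuousLinearMap.adjoint φ x - ContinuousLinearMap.adjoint φ y‖ := by
        rintro x ⟨hxs, hxz, hxkey⟩ y ⟨hys, hyz, -⟩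
        have hclose : ‖y - x‖ ≤ 1 / (j + 1) := by
          have h8 : y - x = (y - z) - (x - z) := by abel
          rw [h8]
          calc ‖(y - z) - (x - z)‖ ≤ ‖y - z‖ + ‖x - z‖ := norm_sub_le _ _
            _ ≤ 1 / (2 * (j + 1)) + 1 / (2 * (j + 1)) := add_le_add hyz hxz
            _ = 1 / (j + 1) := by
                have hj0 : ((j : ℝ) + 1) ≠ 0 := by positivity
                field_simp
                norm_num
        have hk := hxkey y hys hclose
        have h9 : ContinuousLinearMap.adjoint φ (y - x)
            = ContinuousLinearMap.adjoint φ y - ContinuousLinearMap.adjoint φ x := map_sub _ _ _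
        rw [h9] at hk
        rw [← norm_neg (x - y), show -(x - y) = y - x by abel,
          ← norm_neg (ContinuousLinearMap.adjoint φ x - ContinuousLinearMap.adjoint φ y),
          show -(ContinuousLinearMap.adjoint φ x - ContinuousLinearMap.adjoint φ y)
            = ContinuousLinearMap.adjoint φ y - ContinuousLinearMap.adjoint φ x by abel]
        exact hk
      obtain ⟨v, hvlip, hv⟩ := aux_left_inverse
        (fun x => ContinuousLinearMap.adjoint φ x) E hbl
      refine ⟨fun x => ContinuousLinearMap.adjoint φ x, v,
        ⟨‖ContinuousLinearMap.adjoint φ‖₊, (ContinuousLinearMap.adjoint φ).lipschitz⟩, hvlip, ?_⟩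
      intro x hx
      obtain ⟨Kv, hKv⟩ := hvlip
      have hcl : IsClosed {x | v (ContinuousLinearMap.adjoint φ x) = x} :=
        isClosed_eq (hKv.continuous.comp (ContinuousLinearMap.adjoint φ).continuous) continuous_id
      exact closure_minimal (fun y hy => hv y hy) hcl hx
end

section
/- Let u : ℝⁿ → ℝᵐ be 1-Lipschitz and let k ∈ {1,…,m}. Define α_k : ℝⁿ → ℝ ∪ {∞} by α_k(x) = sup{ r ≥ 0 : there exist a k-dimensional linear subspace V ⊆ ℝⁿ and a linear isometry T : V → ℝᵐ such that u(x) − u(y) = T(x − y) for all y ∈ (x + V) ∩ B(x, r) }. Then α_k is upper semicontinuous on ℝⁿ. -/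
set_option maxHeartbeats 1000000

open scoped ENNReal
open Module Filter Metric Topology RealInnerProductSpace

noncomputable def alphaK {n m : ℕ}
    (u : EuclideanSpace ℝ (Fin n) → EuclideanSpace ℝ (Fin m)) (k : ℕ)
    (x : EuclideanSpace ℝ (Fin n)) : ℝ≥0∞ :=
  sSup {r : ℝ≥0∞ | ∃ V : Submodule ℝ (EuclideanSpace ℝ (Fin n)),
    Module.finrank ℝ V = k ∧
    ∃ T : EuclideanSpace ℝ (Fin n) →L[ℝ] EuclideanSpace ℝ (Fin m),
      (∀ v ∈ V, ‖T v‖ = ‖v‖) ∧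
      ∀ y : EuclideanSpace ℝ (Fin n), y - x ∈ V → edist y x ≤ r →
        u x - u y = T (x - y)}

abbrev Euc (n : ℕ) := EuclideanSpace ℝ (Fin n)

def AKSet {n m : ℕ} (u : Euc n → Euc m) (k : ℕ) (x : Euc n) : Set ℝ≥0∞ :=
  {r : ℝ≥0∞ | ∃ V : Submodule ℝ (Euc n),
    Module.finrank ℝ V = k ∧
    ∃ T : Euc n →L[ℝ] Euc m,
      (∀ v ∈ V, ‖T v‖ = ‖v‖) ∧
      ∀ y : Euc n, y - x ∈ V → edist y x ≤ r →
        u x - u y = T (x - y)}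

lemma alphaK_eq {n m : ℕ} (u : Euc n → Euc m) (k : ℕ) (x : Euc n) :
    alphaK u k x = sSup (AKSet u k x) := rfl

lemma AKSet_mono {n m : ℕ} {u : Euc n → Euc m} {k : ℕ} {x : Euc n} {r r' : ℝ≥0∞}
    (h : r' ≤ r) (hr : r ∈ AKSet u k x) : r' ∈ AKSet u k x := by
  obtain ⟨V, hV, T, hT, hc⟩ := hr
  exact ⟨V, hV, T, hT, fun y h1 h2 => hc y h1 (h2.trans h)⟩

lemma norm_orth_sum {n k : ℕ} {v : Fin k → Euc n} (hv : Orthonormal ℝ v) (c : Fin k → ℝ) :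
    ‖∑ i, c i • v i‖ ^ 2 = ∑ i, c i ^ 2 := by
  have h := hv.inner_sum c c Finset.univ
  rw [real_inner_self_eq_norm_sq] at h
  simpa [pow_two] using h

lemma norm_sum_eq {n k : ℕ} {v w : Fin k → Euc n} (hv : Orthonormal ℝ v) (hw : Orthonormal ℝ w)
    (c : Fin k → ℝ) : ‖∑ i, c i • v i‖ = ‖∑ i, c i • w i‖ := by
  have h1 := norm_orth_sum hv c
  have h2 := norm_orth_sum hw c
  nlinarith [norm_nonneg (∑ i, c i • v i), norm_nonneg (∑ i, c i • w i)]

lemma isClosed_AKmem {n m : ℕ} (u : Euc n → Euc m) (hu : LipschitzWith 1 u) (k : ℕ)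
    (s : ℝ≥0∞) : IsClosed {x : Euc n | s ∈ AKSet u k x} := by
  apply IsSeqClosed.isClosed
  intro x x₀ hmem hlim
  choose V hVr T hTiso hTc using hmem
  let b : ∀ l, OrthonormalBasis (Fin k) ℝ (V l) := fun l =>
    (stdOrthonormalBasis ℝ (V l)).reindex (finCongr (hVr l))
  let e : ℕ → Fin k → Euc n := fun l i => (b l i : Euc n)
  have he_orth : ∀ l, Orthonormal ℝ (e l) := fun l =>
    (b l).orthonormal.comp_linearIsometry (V l).subtypeₗᵢ
  have he_mem : ∀ l i, e l i ∈ V l := fun l i => (b l i).2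
  -- the modified operators
  let T' : ℕ → (Euc n →L[ℝ] Euc m) := fun l =>
    (T l).comp (((V l).subtypeL).comp ((V l).orthogonalProjectionOnto))
  have hT'V : ∀ l, ∀ w ∈ V l, T' l w = T l w := by
    intro l w hw
    have h : (V l).orthogonalProjectionOnto w = ⟨w, hw⟩ :=
      Submodule.orthogonalProjectionOnto_mem_subspace_eq_self (⟨w, hw⟩ : V l)
    simp [T', h]
  have hT'iso : ∀ l, ∀ w ∈ V l, ‖T' l w‖ = ‖w‖ := fun l w hw => by
    rw [hT'V l w hw]; exact hTiso l w hw
  have hT'norm : ∀ l, ‖T' l‖ ≤ 1 := by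
    intro l
    refine ContinuousLinearMap.opNorm_le_bound _ zero_le_one (fun v => ?_)
    have h1 : T' l v = T l (((V l).orthogonalProjectionOnto v : Euc n)) := rfl
    rw [h1, hTiso l _ (SetLike.coe_mem _), one_mul]
    calc ‖((V l).orthogonalProjectionOnto v : Euc n)‖
        = ‖(V l).orthogonalProjectionOnto v‖ := rfl
      _ ≤ ‖(V l).orthogonalProjectionOnto‖ * ‖v‖ := ((V l).orthogonalProjectionOnto).le_opNorm v
      _ ≤ 1 * ‖v‖ := by
          have := Submodule.orthogonalProjectionOnto_norm_le (K := V l)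
          gcongr
      _ = ‖v‖ := one_mul _
  -- compactness
  let G := (Fin k → Euc n) × (Euc n →L[ℝ] Euc m)
  let z : ℕ → G := fun l => (e l, T' l)
  have hz : ∀ l, z l ∈ closedBall (0 : G) 1 := by
    intro l
    rw [mem_closedBall_zero_iff, Prod.norm_def]
    refine max_le ?_ (hT'norm l)
    refine (pi_norm_le_iff_of_nonneg zero_le_one).2 fun i => ?_
    exact le_of_eq ((he_orth l).1 i)
  obtain ⟨a, -, φ, hφ, hconv⟩ := (isCompact_closedBall (0 : G) 1).tendsto_subseq hz
  have hbconv : Tendsto (fun l => e (φ l)) atTop (𝓝 a.1) := (continuous_fst.tendsto a).comp hconv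
  have hTconv : Tendsto (fun l => T' (φ l)) atTop (𝓝 a.2) := (continuous_snd.tendsto a).comp hconv
  have hbi : ∀ i, Tendsto (fun l => e (φ l) i) atTop (𝓝 (a.1 i)) :=
    fun i => tendsto_pi_nhds.1 hbconv i
  have hxconv : Tendsto (fun l => x (φ l)) atTop (𝓝 x₀) := hlim.comp hφ.tendsto_atTop
  have hbb_orth : Orthonormal ℝ a.1 := by
    rw [orthonormal_iff_ite]
    intro i j
    have h1 : Tendsto (fun l => (⟪e (φ l) i, e (φ l) j⟫)) atTop (𝓝 (⟪a.1 i, a.1 j⟫)) :=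
      (hbi i).inner (hbi j)
    have h2 : ∀ l, ⟪e (φ l) i, e (φ l) j⟫ = if i = j then (1:ℝ) else 0 := fun l =>
      orthonormal_iff_ite.1 (he_orth (φ l)) i j
    simp only [h2] at h1
    exact tendsto_nhds_unique h1 tendsto_const_nhds
  have happly : ∀ (w : Euc n) (wl : ℕ → Euc n), Tendsto wl atTop (𝓝 w) →
      Tendsto (fun l => T' (φ l) (wl l)) atTop (𝓝 (a.2 w)) := by
    intro w wl hwl
    have hc : Continuous fun p : (Euc n →L[ℝ] Euc m) × Euc n => p.1 p.2 :=
      (isBoundedBilinearMap_apply (𝕜 := ℝ) (E := Euc n) (F := Euc m)).continuous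
    exact (hc.tendsto (a.2, w)).comp (hTconv.prodMk_nhds hwl)
  refine ⟨Submodule.span ℝ (Set.range a.1), ?_, a.2, ?_, ?_⟩
  · rw [finrank_span_eq_card hbb_orth.linearIndependent]; simp
  · intro v hv
    obtain ⟨c, hc⟩ := (Submodule.mem_span_range_iff_exists_fun ℝ).1 hv
    have hvl : ∀ l, (∑ i, c i • e (φ l) i) ∈ V (φ l) := fun l =>
      Submodule.sum_mem _ fun i _ => Submodule.smul_mem _ _ (he_mem (φ l) i)
    have hvconv : Tendsto (fun l => ∑ i, c i • e (φ l) i) atTop (𝓝 v) := by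
      rw [← hc]
      exact tendsto_finset_sum _ fun i _ => (hbi i).const_smul (c i)
    have h1 : Tendsto (fun l => ‖T' (φ l) (∑ i, c i • e (φ l) i)‖) atTop (𝓝 ‖a.2 v‖) :=
      (happly v _ hvconv).norm
    have h2 : ∀ l, ‖T' (φ l) (∑ i, c i • e (φ l) i)‖ = ‖∑ i, c i • e (φ l) i‖ :=
      fun l => hT'iso (φ l) _ (hvl l)
    simp only [h2] at h1
    exact tendsto_nhds_unique h1 hvconv.norm
  · intro y hyV hyd
    obtain ⟨c, hc⟩ := (Submodule.mem_span_range_iff_exists_fun ℝ).1 hyV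
    set w : ℕ → Euc n := fun l => ∑ i, c i • e (φ l) i with hwdef
    have hwV : ∀ l, w l ∈ V (φ l) := fun l =>
      Submodule.sum_mem _ fun i _ => Submodule.smul_mem _ _ (he_mem (φ l) i)
    have hwnorm : ∀ l, ‖w l‖ = ‖y - x₀‖ := by
      intro l; rw [← hc]; exact norm_sum_eq (he_orth (φ l)) hbb_orth c
    have hwconv : Tendsto w atTop (𝓝 (y - x₀)) := by
      rw [← hc]
      exact tendsto_finset_sum _ fun i _ => (hbi i).const_smul (c i)
    set yl : ℕ → Euc n := fun l => x (φ l) + w l with hyldef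
    have hsub : ∀ l, yl l - x (φ l) = w l := fun l => by simp [hyldef]
    have hylV : ∀ l, yl l - x (φ l) ∈ V (φ l) := fun l => by rw [hsub]; exact hwV l
    have hyld : ∀ l, edist (yl l) (x (φ l)) ≤ s := by
      intro l
      have hd : edist (yl l) (x (φ l)) = edist y x₀ := by
        rw [edist_dist, edist_dist, dist_eq_norm, dist_eq_norm]
        rw [hsub l, hwnorm l]
      rw [hd]; exact hyd
    have hsub2 : ∀ l, x (φ l) - yl l = -(w l) := fun l => by simp [hyldef]
    have heq : ∀ l, u (x (φ l)) - u (yl l) = T' (φ l) (x (φ l) - yl l) := by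
      intro l
      rw [hT'V (φ l) _ (by rw [hsub2]; exact Submodule.neg_mem _ (hwV l))]
      exact hTc (φ l) (yl l) (hylV l) (hyld l)
    have hylconv : Tendsto yl atTop (𝓝 y) := by
      have h := hxconv.add hwconv
      simpa using h
    have hL : Tendsto (fun l => u (x (φ l)) - u (yl l)) atTop (𝓝 (u x₀ - u y)) :=
      ((hu.continuous.tendsto x₀).comp hxconv).sub ((hu.continuous.tendsto y).comp hylconv)
    have hR : Tendsto (fun l => T' (φ l) (x (φ l) - yl l)) atTop (𝓝 (a.2 (x₀ - y))) :=
      happly _ _ (hxconv.sub hylconv)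
    simp only [heq] at hL
    exact tendsto_nhds_unique hL hR

/-- For a `1`-Lipschitz map `u : ℝⁿ → ℝᵐ` and `k ∈ {1, …, m}`, the
function `α_k` is upper semicontinuous on `ℝⁿ`. -/
theorem stmt_12 {n m : ℕ} (u : EuclideanSpace ℝ (Fin n) → EuclideanSpace ℝ (Fin m))
    (hu : LipschitzWith 1 u) (k : ℕ) (hk1 : 1 ≤ k) (hkm : k ≤ m) :
    UpperSemicontinuous (alphaK u k) := by
  intro x₀ c hc
  obtain ⟨s, hs1, hs2⟩ := exists_between hc
  have hns : s ∉ AKSet u k x₀ := fun h => absurd (le_sSup h) (not_le.mpr hs1)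
  have hopen : IsOpen {x : Euc n | s ∉ AKSet u k x} :=
    (isClosed_AKmem u hu k s).isOpen_compl
  filter_upwards [hopen.mem_nhds hns] with x hx
  have hle : alphaK u k x ≤ s := sSup_le fun t ht => by
    by_contra hts
    exact hx (AKSet_mono (le_of_not_ge hts) ht)
  exact lt_of_le_of_lt hle hs2
end

section
/- Let u : ℝⁿ → ℝᵐ be 1-Lipschitz and let k ∈ {1,…,m}. For r ≥ 0 let C_{n,k}(r) be the set of k-dimensional convex cones C ⊆ ℝⁿ for which there exist c₁,…,c_k ∈ C of norm at most 1 whose Gram matrix has determinant at least r. Define β_k : ℝⁿ → ℝ by β_k(x) = sup{ r ≥ 0 : there exist C ∈ C_{n,k}(r) and a linear isometry T : span(C) → ℝᵐ such that u(x) − u(y) = T(x − y) for all y ∈ (x + C) ∩ B(x, r) }. Then β_k is real-valued and upper semicontinuous on ℝⁿ. -/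
/-- A subset of `ℝⁿ` is a convex cone if it is closed under addition and under
multiplication by nonnegative scalars. -/
def IsConvexConeSet {n : ℕ} (C : Set (EuclideanSpace ℝ (Fin n))) : Prop :=
  (∀ c ∈ C, ∀ t : ℝ, 0 ≤ t → t • c ∈ C) ∧ ∀ a ∈ C, ∀ b ∈ C, a + b ∈ C

/-- `C ∈ C_{n,k}(r)`: `C` is a `k`-dimensional convex cone in `ℝⁿ` containing points
`c₁, …, c_k` of norm at most `1` whose Gram matrix has determinant at least `r`. -/
def MemCnk {n : ℕ} (k : ℕ) (r : ℝ) (C : Set (EuclideanSpace ℝ (Fin n))) : Prop :=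
  IsConvexConeSet C ∧ Module.finrank ℝ (Submodule.span ℝ C) = k ∧
  ∃ c : Fin k → EuclideanSpace ℝ (Fin n),
    (∀ i, c i ∈ C ∧ ‖c i‖ ≤ 1) ∧
    r ≤ (Matrix.of fun i j => (inner ℝ (c i) (c j) : ℝ)).det

/-- The set of radii `r ≥ 0` for which there exist a cone `C ∈ C_{n,k}(r)` and a linear
isometry `T : span C → ℝᵐ` with `u x − u y = T (x − y)` for all
`y ∈ (x + C) ∩ B(x, r)`. -/
def betaSet {n m : ℕ} (u : EuclideanSpace ℝ (Fin n) → EuclideanSpace ℝ (Fin m)) (k : ℕ)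
    (x : EuclideanSpace ℝ (Fin n)) : Set ℝ :=
  {r : ℝ | 0 ≤ r ∧ ∃ C : Set (EuclideanSpace ℝ (Fin n)), MemCnk k r C ∧
    ∃ T : EuclideanSpace ℝ (Fin n) →L[ℝ] EuclideanSpace ℝ (Fin m),
      (∀ v ∈ Submodule.span ℝ C, ‖T v‖ = ‖v‖) ∧
      ∀ y : EuclideanSpace ℝ (Fin n), y - x ∈ C → ‖y - x‖ ≤ r →
        u x - u y = T (x - y)}

/-- `β_k(x)` is the supremum of `betaSet u k x`. -/
noncomputable def betaK {n m : ℕ}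
    (u : EuclideanSpace ℝ (Fin n) → EuclideanSpace ℝ (Fin m)) (k : ℕ)
    (x : EuclideanSpace ℝ (Fin n)) : ℝ :=
  sSup (betaSet u k x)


open Finset in
lemma gram_det_le {n k : ℕ} (c : Fin k → EuclideanSpace ℝ (Fin n))
    (hc : ∀ i, ‖c i‖ ≤ 1) :
    (Matrix.of fun i j => (inner ℝ (c i) (c j) : ℝ)).det ≤ (Nat.factorial k : ℝ) := by
  have h := Matrix.det_le (A := Matrix.of fun i j => (inner ℝ (c i) (c j) : ℝ))
    (abv := AbsoluteValue.abs (S := ℝ)) (x := (1:ℝ)) ?_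
  · simpa [Fintype.card_fin, nsmul_eq_mul] using (le_abs_self _).trans h
  · intro i j
    simp only [Matrix.of_apply, AbsoluteValue.abs_apply]
    exact (abs_real_inner_le_norm _ _).trans
      (by nlinarith [hc i, hc j, norm_nonneg (c i), norm_nonneg (c j)])

lemma betaSet_mono {n m : ℕ} (u : EuclideanSpace ℝ (Fin n) → EuclideanSpace ℝ (Fin m))
    (k : ℕ) (x : EuclideanSpace ℝ (Fin n)) {r s : ℝ} (hs : s ∈ betaSet u k x)
    (hr0 : 0 ≤ r) (hrs : r ≤ s) : r ∈ betaSet u k x := by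
  obtain ⟨hs0, C, ⟨hC, hdim, c, hc, hdet⟩, T, hT, hTy⟩ := hs
  exact ⟨hr0, C, ⟨hC, hdim, c, hc, hrs.trans hdet⟩, T, hT,
    fun y hy hyr => hTy y hy (hyr.trans hrs)⟩

lemma betaK_nonneg {n m : ℕ} (u : EuclideanSpace ℝ (Fin n) → EuclideanSpace ℝ (Fin m))
    (k : ℕ) (x : EuclideanSpace ℝ (Fin n)) (hbdd : BddAbove (betaSet u k x)) :
    0 ≤ betaK u k x := by
  rcases (betaSet u k x).eq_empty_or_nonempty with h | ⟨s, hs⟩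
  · simp [betaK, h, Real.sSup_empty]
  · exact le_trans hs.1 (le_csSup hbdd hs)

lemma linearIndependent_of_gram {n k : ℕ} {c : Fin k → EuclideanSpace ℝ (Fin n)}
    (h : 0 < (Matrix.of fun i j => (inner ℝ (c i) (c j) : ℝ)).det) :
    LinearIndependent ℝ c := by
  by_contra hli
  obtain ⟨g, hg, i, hgi⟩ := Fintype.not_linearIndependent_iff.mp hli
  have h0 : (Matrix.of fun i j => (inner ℝ (c i) (c j) : ℝ)).det = 0 := by
    rw [← Matrix.exists_mulVec_eq_zero_iff]
    refine ⟨g, Function.ne_iff.mpr ⟨i, hgi⟩, ?_⟩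
    funext i'
    simp only [Matrix.mulVec, dotProduct, Matrix.of_apply, Pi.zero_apply]
    calc ∑ j, (inner ℝ (c i') (c j) : ℝ) * g j
        = ∑ j, (inner ℝ (c i') (g j • c j) : ℝ) :=
          Finset.sum_congr rfl fun j _ => by rw [real_inner_smul_right]; ring
      _ = (inner ℝ (c i') (∑ j, g j • c j) : ℝ) := by rw [inner_sum]
      _ = 0 := by rw [hg, inner_zero_right]
  exact h.ne' h0

open Finset Submodule in
lemma betaSet_construct {n m : ℕ} (u : EuclideanSpace ℝ (Fin n) → EuclideanSpace ℝ (Fin m))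
    {k : ℕ} (x : EuclideanSpace ℝ (Fin n)) {r : ℝ} (hr0 : 0 ≤ r)
    (c : Fin k → EuclideanSpace ℝ (Fin n))
    (T : EuclideanSpace ℝ (Fin n) →L[ℝ] EuclideanSpace ℝ (Fin m))
    (hdet : r ≤ (Matrix.of fun i j => (inner ℝ (c i) (c j) : ℝ)).det)
    (hdetpos : 0 < (Matrix.of fun i j => (inner ℝ (c i) (c j) : ℝ)).det)
    (hc1 : ∀ i, ‖c i‖ ≤ 1)
    (hT : ∀ v ∈ Submodule.span ℝ (Set.range c), ‖T v‖ = ‖v‖)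
    (hu : ∀ t : Fin k → ℝ, (∀ i, 0 ≤ t i) → ‖∑ i, t i • c i‖ ≤ r →
      u x - u (x + ∑ i, t i • c i) = T (-(∑ i, t i • c i))) :
    r ∈ betaSet u k x := by
  classical
  set C : Set (EuclideanSpace ℝ (Fin n)) :=
    {v | ∃ t : Fin k → ℝ, (∀ i, 0 ≤ t i) ∧ v = ∑ i, t i • c i} with hCdef
  have hcmem : ∀ i, c i ∈ C := by
    intro i
    refine ⟨Pi.single i 1, fun j => ?_, ?_⟩
    · rcases eq_or_ne j i with rfl | h
      · simp
      · simp [Pi.single_apply, h]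
    · simp [Pi.single_apply, ite_smul]
  have hspan : Submodule.span ℝ C = Submodule.span ℝ (Set.range c) := by
    apply le_antisymm
    · rw [span_le]
      rintro v ⟨t, ht, rfl⟩
      exact sum_mem fun i _ => smul_mem _ _ (subset_span (Set.mem_range_self i))
    · exact span_mono (Set.range_subset_iff.mpr hcmem)
  refine ⟨hr0, C, ⟨⟨?_, ?_⟩, ?_, c, fun i => ⟨hcmem i, hc1 i⟩, hdet⟩, T, ?_, ?_⟩
  · rintro v ⟨t, ht, rfl⟩ s hs
    exact ⟨fun i => s * t i, fun i => mul_nonneg hs (ht i),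
      by rw [Finset.smul_sum]; simp [smul_smul]⟩
  · rintro a ⟨t, ht, rfl⟩ b ⟨t', ht', rfl⟩
    exact ⟨t + t', fun i => add_nonneg (ht i) (ht' i),
      by rw [← Finset.sum_add_distrib]; simp [add_smul]⟩
  · rw [hspan]
    simpa using finrank_span_eq_card (linearIndependent_of_gram hdetpos)
  · intro v hv
    exact hT v (hspan ▸ hv)
  · rintro y ⟨t, ht, hy⟩ hyr
    have hyx : y = x + ∑ i, t i • c i := by
      rw [← hy]; abel
    have h1 : ‖∑ i, t i • c i‖ ≤ r := hy ▸ hyr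
    have := hu t ht h1
    rw [hyx]
    convert this using 2
    rw [← hy]; abel
open Finset Submodule in
lemma betaSet_extract {n m : ℕ} {u : EuclideanSpace ℝ (Fin n) → EuclideanSpace ℝ (Fin m)}
    {k : ℕ} (hk1 : 1 ≤ k) {x : EuclideanSpace ℝ (Fin n)} {r : ℝ}
    (hr : r ∈ betaSet u k x) :
    ∃ (c : Fin k → EuclideanSpace ℝ (Fin n))
      (T : EuclideanSpace ℝ (Fin n) →L[ℝ] EuclideanSpace ℝ (Fin m)),
      (∀ i, ‖c i‖ ≤ 1) ∧
      r ≤ (Matrix.of fun i j => (inner ℝ (c i) (c j) : ℝ)).det ∧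
      ‖T‖ ≤ 1 ∧
      (∀ v ∈ Submodule.span ℝ (Set.range c), ‖T v‖ = ‖v‖) ∧
      (∀ t : Fin k → ℝ, (∀ i, 0 ≤ t i) → ‖∑ i, t i • c i‖ ≤ r →
        u x - u (x + ∑ i, t i • c i) = T (-(∑ i, t i • c i))) := by
  obtain ⟨hr0, C, ⟨⟨hCsmul, hCadd⟩, hdim, c, hc, hdet⟩, T, hT, hTy⟩ := hr
  -- the cone contains all nonnegative combinations of the `c i`
  have h0C : (0 : EuclideanSpace ℝ (Fin n)) ∈ C := by
    have := hCsmul (c ⟨0, hk1⟩) (hc _).1 0 le_rfl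
    simpa using this
  have hsum : ∀ t : Fin k → ℝ, (∀ i, 0 ≤ t i) → (∑ i, t i • c i) ∈ C := by
    intro t ht
    classical
    refine Finset.sum_induction _ (· ∈ C) (fun a b ha hb => hCadd a ha b hb) h0C ?_
    intro i _
    exact hCsmul (c i) (hc i).1 (t i) (ht i)
  -- span of the range is inside span C
  have hKC : Submodule.span ℝ (Set.range c) ≤ Submodule.span ℝ C :=
    span_mono (Set.range_subset_iff.mpr fun i => (hc i).1)
  set K := Submodule.span ℝ (Set.range c) with hK
  set P : EuclideanSpace ℝ (Fin n) →L[ℝ] EuclideanSpace ℝ (Fin n) :=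
    K.subtypeL.comp (orthogonalProjection K) with hP
  have hPmem : ∀ w, P w ∈ K := fun w => coe_mem _
  have hPid : ∀ v ∈ K, P v = v := by
    intro v hv
    simp [hP, Submodule.starProjection_eq_self_iff.mpr hv]
  have hPle : ∀ w, ‖P w‖ ≤ ‖w‖ := by
    intro w
    have h1 : ‖P w‖ = ‖orthogonalProjection K w‖ := rfl
    rw [h1]
    calc ‖orthogonalProjection K w‖ ≤ ‖orthogonalProjection K‖ * ‖w‖ :=
          (orthogonalProjection K).le_opNorm w
      _ ≤ 1 * ‖w‖ := by
          have := orthogonalProjection_norm_le K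
          nlinarith [norm_nonneg w]
      _ = ‖w‖ := one_mul ‖w‖
  refine ⟨c, T.comp P, fun i => (hc i).2, hdet, ?_, ?_, ?_⟩
  · refine ContinuousLinearMap.opNorm_le_bound _ zero_le_one fun w => ?_
    have : ‖T (P w)‖ = ‖P w‖ := hT _ (hKC (hPmem w))
    simp only [ContinuousLinearMap.comp_apply]
    rw [this, one_mul]
    exact hPle w
  · intro v hv
    simp only [ContinuousLinearMap.comp_apply, hPid v hv]
    exact hT v (hKC hv)
  · intro t ht hle
    have hmem : (x + ∑ i, t i • c i) - x ∈ C := by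
      simpa using hsum t ht
    have hle' : ‖(x + ∑ i, t i • c i) - x‖ ≤ r := by simpa using hle
    have := hTy _ hmem hle'
    have hxy : x - (x + ∑ i, t i • c i) = -(∑ i, t i • c i) := by abel
    rw [hxy] at this
    rw [this]
    have hmemK : -(∑ i, t i • c i) ∈ K := by
      refine neg_mem (sum_mem fun i _ => ?_)
      exact smul_mem _ _ (subset_span (Set.mem_range_self i))
    simp only [ContinuousLinearMap.comp_apply, hPid _ hmemK]

open Topology in
/-- For a `1`-Lipschitz map `u : ℝⁿ → ℝᵐ` and `k ∈ {1, …, m}`, the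
function `β_k` is real-valued (the defining set of radii is bounded above) and upper
semicontinuous on `ℝⁿ`. -/
theorem stmt_13 {n m : ℕ} (u : EuclideanSpace ℝ (Fin n) → EuclideanSpace ℝ (Fin m))
    (hu : LipschitzWith 1 u) (k : ℕ) (hk1 : 1 ≤ k) (hkm : k ≤ m) :
    (∀ x, BddAbove (betaSet u k x)) ∧ UpperSemicontinuous (betaK u k) := by
  classical
  have hbdd : ∀ x, BddAbove (betaSet u k x) := fun x =>
    ⟨(Nat.factorial k : ℝ), fun r hr => by
      obtain ⟨_, C, ⟨_, _, c, hc, hdet⟩, _⟩ := hr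
      exact hdet.trans (gram_det_le c fun i => (hc i).2)⟩
  refine ⟨hbdd, fun x₀ b hb => ?_⟩
  by_contra hcon
  rw [Filter.not_eventually] at hcon
  obtain ⟨xs, hxs, hxsb'⟩ := Filter.exists_seq_forall_of_frequently hcon
  have hxsb : ∀ j, b ≤ betaK u k (xs j) := fun j => not_lt.mp (hxsb' j)
  have h0 : 0 ≤ betaK u k x₀ := betaK_nonneg u k x₀ (hbdd x₀)
  set r : ℝ := (betaK u k x₀ + b) / 2 with hrdef
  have hr1 : betaK u k x₀ < r := by rw [hrdef]; linarith
  have hr2 : r < b := by rw [hrdef]; linarith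
  have hr0 : 0 < r := lt_of_le_of_lt h0 hr1
  have hrmem : ∀ j, r ∈ betaSet u k (xs j) := by
    intro j
    have hbj : b ≤ betaK u k (xs j) := hxsb j
    have hne : (betaSet u k (xs j)).Nonempty := by
      by_contra hne
      rw [Set.not_nonempty_iff_eq_empty] at hne
      have hz : betaK u k (xs j) = 0 := by simp [betaK, hne, Real.sSup_empty]
      rw [hz] at hbj
      linarith
    obtain ⟨s, hs, hrs⟩ := exists_lt_of_lt_csSup hne (lt_of_lt_of_le hr2 hbj)
    exact betaSet_mono u k _ hs hr0.le hrs.le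
  choose c T hc1 hdet hTn hTi hTu using fun j => betaSet_extract hk1 (hrmem j)
  -- compactness: extract a convergent subsequence of `(c j, T j)`
  have hZ : IsCompact ((Set.univ.pi fun _ : Fin k =>
      Metric.closedBall (0 : EuclideanSpace ℝ (Fin n)) 1) ×ˢ
      Metric.closedBall (0 : EuclideanSpace ℝ (Fin n) →L[ℝ] EuclideanSpace ℝ (Fin m)) 1) :=
    (isCompact_univ_pi fun _ => isCompact_closedBall _ _).prod (isCompact_closedBall _ _)
  have hmemZ : ∀ j, (c j, T j) ∈ ((Set.univ.pi fun _ : Fin k =>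
      Metric.closedBall (0 : EuclideanSpace ℝ (Fin n)) 1) ×ˢ
      Metric.closedBall (0 : EuclideanSpace ℝ (Fin n) →L[ℝ] EuclideanSpace ℝ (Fin m)) 1) :=
    fun j => ⟨fun i _ => by simpa [Metric.mem_closedBall, dist_zero_right] using hc1 j i,
      by simpa [Metric.mem_closedBall, dist_zero_right] using hTn j⟩
  obtain ⟨p, hpZ, φ, hφ, hconv⟩ := hZ.tendsto_subseq hmemZ
  have hcconv : Filter.Tendsto (fun j => c (φ j)) Filter.atTop (𝓝 p.1) :=
    (continuous_fst.tendsto p).comp hconv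
  have hTconv : Filter.Tendsto (fun j => T (φ j)) Filter.atTop (𝓝 p.2) :=
    (continuous_snd.tendsto p).comp hconv
  have hxsφ : Filter.Tendsto (fun j => xs (φ j)) Filter.atTop (𝓝 x₀) :=
    hxs.comp (hφ.tendsto_atTop)
  -- limit Gram determinant
  have hdetcont : Continuous fun d : Fin k → EuclideanSpace ℝ (Fin n) =>
      (Matrix.of fun i j => (inner ℝ (d i) (d j) : ℝ)).det := by
    apply Continuous.matrix_det
    exact continuous_matrix fun i j => by
      simp only [Matrix.of_apply]; exact Continuous.inner (continuous_apply i) (continuous_apply j)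
  have hdetL : r ≤ (Matrix.of fun i j => (inner ℝ (p.1 i) (p.1 j) : ℝ)).det :=
    ge_of_tendsto' ((hdetcont.tendsto p.1).comp hcconv) fun j => hdet (φ j)
  have hc1L : ∀ i, ‖p.1 i‖ ≤ 1 := fun i => by
    have := hpZ.1 i (Set.mem_univ i)
    simpa [Metric.mem_closedBall, dist_zero_right] using this
  -- limit isometry on the span
  have hTiL : ∀ v ∈ Submodule.span ℝ (Set.range p.1), ‖p.2 v‖ = ‖v‖ := by
    intro v hv
    obtain ⟨a, ha⟩ := Submodule.mem_span_range_iff_exists_fun ℝ |>.mp hv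
    have hvconv : Filter.Tendsto (fun j => ∑ i, a i • c (φ j) i) Filter.atTop (𝓝 v) := by
      rw [← ha]
      exact tendsto_finset_sum _ fun i _ =>
        (((continuous_apply i).tendsto p.1).comp hcconv).const_smul (a i)
    have happ : Filter.Tendsto (fun j => T (φ j) (∑ i, a i • c (φ j) i))
        Filter.atTop (𝓝 (p.2 v)) :=
      (isBoundedBilinearMap_apply.continuous.tendsto (p.2, v)).comp (hTconv.prodMk_nhds hvconv)
    have heq : ∀ j, ‖T (φ j) (∑ i, a i • c (φ j) i)‖ = ‖∑ i, a i • c (φ j) i‖ :=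
      fun j => hTi (φ j) _ (Submodule.sum_mem _ fun i _ =>
        Submodule.smul_mem _ _ (Submodule.subset_span (Set.mem_range_self i)))
    exact tendsto_nhds_unique ((continuous_norm.tendsto _).comp happ)
      (Filter.Tendsto.congr (fun j => (heq j).symm) ((continuous_norm.tendsto _).comp hvconv))
  -- the contradictory radius
  set r' : ℝ := (betaK u k x₀ + r) / 2 with hr'def
  have hr'1 : betaK u k x₀ < r' := by rw [hr'def]; linarith
  have hr'2 : r' < r := by rw [hr'def]; linarith
  have hr'0 : 0 ≤ r' := le_trans h0 hr'1.le
  -- limit of the equality condition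
  have huL : ∀ t : Fin k → ℝ, (∀ i, 0 ≤ t i) → ‖∑ i, t i • p.1 i‖ ≤ r' →
      u x₀ - u (x₀ + ∑ i, t i • p.1 i) = p.2 (-(∑ i, t i • p.1 i)) := by
    intro t ht hle
    have hsconv : Filter.Tendsto (fun j => ∑ i, t i • c (φ j) i) Filter.atTop
        (𝓝 (∑ i, t i • p.1 i)) :=
      tendsto_finset_sum _ fun i _ =>
        (((continuous_apply i).tendsto p.1).comp hcconv).const_smul (t i)
    have hev : ∀ᶠ j in Filter.atTop, ‖∑ i, t i • c (φ j) i‖ < r :=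
      Filter.Tendsto.eventually_lt_const (lt_of_le_of_lt hle hr'2)
        ((continuous_norm.tendsto _).comp hsconv)
    have heveq : ∀ᶠ j in Filter.atTop,
        u (xs (φ j)) - u (xs (φ j) + ∑ i, t i • c (φ j) i)
          = T (φ j) (-(∑ i, t i • c (φ j) i)) := by
      filter_upwards [hev] with j hj
      exact hTu (φ j) t ht hj.le
    have hL : Filter.Tendsto (fun j => u (xs (φ j)) - u (xs (φ j) + ∑ i, t i • c (φ j) i))
        Filter.atTop (𝓝 (u x₀ - u (x₀ + ∑ i, t i • p.1 i))) :=
      ((hu.continuous.tendsto x₀).comp hxsφ).sub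
        ((hu.continuous.tendsto _).comp (hxsφ.add hsconv))
    have hR : Filter.Tendsto (fun j => T (φ j) (-(∑ i, t i • c (φ j) i)))
        Filter.atTop (𝓝 (p.2 (-(∑ i, t i • p.1 i)))) :=
      (isBoundedBilinearMap_apply.continuous.tendsto (p.2, -(∑ i, t i • p.1 i))).comp
        (hTconv.prodMk_nhds hsconv.neg)
    exact tendsto_nhds_unique (hL.congr' (heveq.mono fun j hj => hj)) hR
  have hmem' : r' ∈ betaSet u k x₀ :=
    betaSet_construct u x₀ hr'0 p.1 p.2 (le_trans hr'2.le hdetL)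
      (lt_of_lt_of_le hr0 hdetL) hc1L hTiL huL
  have : r' ≤ betaK u k x₀ := le_csSup (hbdd x₀) hmem'
  linarith
end

section
/- Let u : ℝⁿ → ℝᵐ be 1-Lipschitz, let N(u) be the set of points where u is not differentiable, and define S : ℝⁿ → {nonempty closed subsets of ℝⁿ} by: S(x) is the unique leaf of u containing x when x ∉ N(u), and S(x) = {x} when x ∈ N(u). Then for every compact set K ⊆ ℝⁿ, the set {x ∈ ℝⁿ : S(x) ∩ K ≠ ∅} is a Borel subset of ℝⁿ; consequently the same holds with K replaced by any open set U ⊆ ℝⁿ. -/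
open scoped RealInnerProductSpace

variable {n m : ℕ} {u : EuclideanSpace ℝ (Fin n) → EuclideanSpace ℝ (Fin m)}

/-- On a segment where `u` is isometric, `u` is affine. -/
lemma seg_affine (hu : LipschitzWith 1 u) {x y : EuclideanSpace ℝ (Fin n)}
    (h : ‖u y - u x‖ = ‖y - x‖) {t : ℝ} (ht : t ∈ Set.Icc (0:ℝ) 1) :
    u (x + t • (y - x)) = u x + t • (u y - u x) := by
  obtain ⟨ht0, ht1⟩ := ht
  set z := x + t • (y - x) with hz
  set v := u z - u x with hv
  set w := u y - u z with hw
  have hvw : v + w = u y - u x := by simp [hv, hw]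
  have lip : ∀ a b : EuclideanSpace ℝ (Fin n), ‖u a - u b‖ ≤ ‖a - b‖ := by
    intro a b
    have := hu.dist_le_mul a b
    simpa [dist_eq_norm] using this
  have hzx : ‖z - x‖ = t * ‖y - x‖ := by
    simp [hz, norm_smul, abs_of_nonneg ht0]
  have hyz : ‖y - z‖ = (1 - t) * ‖y - x‖ := by
    have : y - z = (1 - t) • (y - x) := by
      simp [hz, sub_smul, smul_sub]; abel
    rw [this, norm_smul, Real.norm_eq_abs, abs_of_nonneg (by linarith)]
  have h1 : ‖v‖ ≤ t * ‖y - x‖ := by rw [← hzx]; exact lip z x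
  have h2 : ‖w‖ ≤ (1 - t) * ‖y - x‖ := by rw [← hyz]; exact lip y z
  have htri : ‖y - x‖ ≤ ‖v‖ + ‖w‖ := by
    calc ‖y - x‖ = ‖v + w‖ := by rw [hvw, h]
    _ ≤ ‖v‖ + ‖w‖ := norm_add_le _ _
  have hveq : ‖v‖ = t * ‖y - x‖ := le_antisymm h1 (by linarith)
  have hweq : ‖w‖ = (1 - t) * ‖y - x‖ := le_antisymm h2 (by linarith)
  have hsum : ‖v + w‖ = ‖v‖ + ‖w‖ := by
    rw [hvw, h, hveq, hweq]; ring
  have hinner : ⟪v, w⟫ = ‖v‖ * ‖w‖ := by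
    have := congrArg (fun r => r ^ 2) hsum
    simp only [norm_add_sq_real] at this
    nlinarith [this]
  have hkey : ‖v - t • (v + w)‖ ^ 2 = 0 := by
    have expand : ‖v - t • (v + w)‖ ^ 2
        = ‖v‖ ^ 2 - 2 * (t * (‖v‖^2 + ⟪v, w⟫)) + t^2 * ‖v + w‖^2 := by
      rw [norm_sub_sq_real, norm_smul, real_inner_smul_right, inner_add_right,
        real_inner_self_eq_norm_sq, Real.norm_eq_abs, mul_pow, sq_abs]
    rw [expand, hsum, hinner, hveq, hweq]
    ring
  have : v - t • (v + w) = 0 := by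
    have := pow_eq_zero_iff (n := 2) (by norm_num) |>.mp hkey
    simpa [norm_eq_zero] using this
  have hv' : v = t • (v + w) := by
    rwa [sub_eq_zero] at this
  rw [hvw] at hv'
  have : u z = u x + t • (u y - u x) := by
    rw [← hv']; simp [hv]
  simpa [hz] using this

/-- At a differentiability point, the derivative maps `y - x` to `u y - u x`
whenever `u` is isometric on `{x, y}`. -/
lemma dir_deriv (hu : LipschitzWith 1 u) {x y : EuclideanSpace ℝ (Fin n)}
    (hx : DifferentiableAt ℝ u x) (h : ‖u y - u x‖ = ‖y - x‖) :
    fderiv ℝ u x (y - x) = u y - u x := by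
  set g : ℝ → EuclideanSpace ℝ (Fin m) := fun t => u (x + t • (y - x)) with hg
  have hline : HasDerivAt (fun t : ℝ => x + t • (y - x)) (y - x) 0 := by
    simpa using ((hasDerivAt_id (0:ℝ)).smul_const (y - x)).const_add x
  have hx' : HasFDerivAt u (fderiv ℝ u x) ((fun t : ℝ => x + t • (y - x)) 0) := by
    simpa using hx.hasFDerivAt
  have hg1 : HasDerivWithinAt g (fderiv ℝ u x (y - x)) (Set.Icc 0 1) 0 :=
    (hx'.comp_hasDerivAt 0 hline).hasDerivWithinAt
  have hg2 : HasDerivWithinAt g (u y - u x) (Set.Icc 0 1) 0 := by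
    have base : HasDerivAt (fun t : ℝ => u x + t • (u y - u x)) (u y - u x) 0 := by
      simpa using ((hasDerivAt_id (0:ℝ)).smul_const (u y - u x)).const_add (u x)
    refine base.hasDerivWithinAt.congr (fun t ht => ?_) ?_
    · exact seg_affine hu h ht
    · exact seg_affine hu h ⟨le_refl 0, zero_le_one⟩
  exact (uniqueDiffOn_Icc zero_lt_one 0 ⟨le_refl 0, zero_le_one⟩).eq_deriv _ hg1 hg2

/-- Two points isometric to a differentiability point are isometric to each other. -/
lemma pair_isom (hu : LipschitzWith 1 u) {x y z : EuclideanSpace ℝ (Fin n)}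
    (hx : DifferentiableAt ℝ u x) (hy : ‖u y - u x‖ = ‖y - x‖)
    (hz : ‖u z - u x‖ = ‖z - x‖) : ‖u y - u z‖ = ‖y - z‖ := by
  set f := fderiv ℝ u x with hf
  have hnorm : ∀ w, ‖f w‖ ≤ ‖w‖ := by
    intro w
    calc ‖f w‖ ≤ ‖f‖ * ‖w‖ := f.le_opNorm w
    _ ≤ 1 * ‖w‖ := by
        have hle : ‖f‖ ≤ 1 := by simpa using norm_fderiv_le_of_lipschitz ℝ hu (x₀ := x)
        exact mul_le_mul_of_nonneg_right hle (norm_nonneg w)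
    _ = ‖w‖ := one_mul _
  have fa : f (y - x) = u y - u x := dir_deriv hu hx hy
  have fb : f (z - x) = u z - u x := dir_deriv hu hx hz
  have hna : ‖f (y - x)‖ = ‖y - x‖ := by rw [fa, hy]
  have hnb : ‖f (z - x)‖ = ‖z - x‖ := by rw [fb, hz]
  have key : ⟪f (y - x), f (z - x)⟫ = ⟪y - x, z - x⟫ := by
    have h1 : ‖f ((y - x) + (z - x))‖ ^ 2 ≤ ‖(y - x) + (z - x)‖ ^ 2 := by
      have := hnorm ((y - x) + (z - x))
      nlinarith [norm_nonneg (f ((y - x) + (z - x))), norm_nonneg ((y - x) + (z - x))]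
    have h2 : ‖f ((y - x) - (z - x))‖ ^ 2 ≤ ‖(y - x) - (z - x)‖ ^ 2 := by
      have := hnorm ((y - x) - (z - x))
      nlinarith [norm_nonneg (f ((y - x) - (z - x))), norm_nonneg ((y - x) - (z - x))]
    rw [map_add, norm_add_sq_real, norm_add_sq_real, hna, hnb] at h1
    rw [map_sub, norm_sub_sq_real, norm_sub_sq_real, hna, hnb] at h2
    linarith
  have hsq : ‖u y - u z‖ ^ 2 = ‖y - z‖ ^ 2 := by
    have e1 : u y - u z = f (y - x) - f (z - x) := by rw [fa, fb]; abel
    have e2 : y - z = (y - x) - (z - x) := by abel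
    rw [e1, e2, norm_sub_sq_real, norm_sub_sq_real, hna, hnb, key]
  nlinarith [norm_nonneg (u y - u z), norm_nonneg (y - z)]

/-- At a differentiability point, any leaf through it is the full isometry set. -/
lemma leaf_eq (hu : LipschitzWith 1 u) {x : EuclideanSpace ℝ (Fin n)}
    (hx : DifferentiableAt ℝ u x) {S : Set (EuclideanSpace ℝ (Fin n))}
    (hS : IsLeaf u S) (hxS : x ∈ S) :
    S = {y | ‖u y - u x‖ = ‖y - x‖} := by
  apply Set.Subset.antisymm
  · intro y hy
    exact hS.1 y hy x hxS
  · intro y hy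
    by_contra hns
    obtain ⟨z, hzS, hlt⟩ := hS.2 y hns
    have hz : ‖u z - u x‖ = ‖z - x‖ := hS.1 z hzS x hxS
    have := pair_isom hu hx hy hz
    rw [this] at hlt
    exact lt_irrefl _ hlt

/-- The set of points whose isometry set meets a compact set is closed. -/
lemma AK_closed (hu : LipschitzWith 1 u) {K : Set (EuclideanSpace ℝ (Fin n))}
    (hK : IsCompact K) :
    IsClosed {x | ∃ y ∈ K, ‖u y - u x‖ = ‖y - x‖} := by
  haveI : CompactSpace K := isCompact_iff_compactSpace.mp hK
  have hC : IsClosed {p : EuclideanSpace ℝ (Fin n) × K |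
      ‖u (p.2 : EuclideanSpace ℝ (Fin n)) - u p.1‖ = ‖(p.2 : EuclideanSpace ℝ (Fin n)) - p.1‖} := by
    apply isClosed_eq
    · exact ((hu.continuous.comp (continuous_subtype_val.comp continuous_snd)).sub
        (hu.continuous.comp continuous_fst)).norm
    · exact ((continuous_subtype_val.comp continuous_snd).sub continuous_fst).norm
  have himg := isClosedMap_fst_of_compactSpace _ hC
  convert himg using 1
  ext x
  constructor
  · rintro ⟨y, hyK, hy⟩
    exact ⟨(x, ⟨y, hyK⟩), hy, rfl⟩
  · rintro ⟨⟨x', y⟩, hy, rfl⟩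
    exact ⟨y, y.2, hy⟩

/-- Every open set in Euclidean space is a countable union of compact sets. -/
lemma open_eq_iUnion_compact {U : Set (EuclideanSpace ℝ (Fin n))} (hU : IsOpen U) :
    ∃ K : ℕ → Set (EuclideanSpace ℝ (Fin n)),
      (∀ k, IsCompact (K k)) ∧ U = ⋃ k, K k := by
  refine ⟨fun k => Metric.closedBall 0 k \ Metric.thickening (1 / (k + 1)) Uᶜ, fun k => ?_, ?_⟩
  · refine IsCompact.of_isClosed_subset (isCompact_closedBall 0 k) ?_ Set.diff_subset
    exact Metric.isClosed_closedBall.sdiff Metric.isOpen_thickening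
  · ext x
    simp only [Set.mem_iUnion, Set.mem_diff, Metric.mem_closedBall, dist_zero_right]
    constructor
    · intro hx
      obtain ⟨ε, hε, hball⟩ := Metric.isOpen_iff.mp hU x hx
      obtain ⟨k1, hk1⟩ := exists_nat_ge ‖x‖
      obtain ⟨k2, hk2⟩ := exists_nat_ge (1 / ε)
      refine ⟨k1 + k2, by push_cast; linarith, ?_⟩
      intro hmem
      rw [Metric.mem_thickening_iff] at hmem
      obtain ⟨z, hzU, hz⟩ := hmem
      have hδε : (1 : ℝ) / (↑(k1 + k2) + 1) ≤ ε := by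
        rw [div_le_iff₀ (by positivity)]
        have h1ε : 1 / ε ≤ (↑(k1 + k2) + 1 : ℝ) := by push_cast; linarith
        rw [div_le_iff₀ hε] at h1ε
        linarith
      exact hzU (hball (by rw [Metric.mem_ball, dist_comm]; linarith))
    · rintro ⟨k, _, hx⟩
      by_contra hxU
      exact hx (Metric.self_subset_thickening (by positivity) Uᶜ hxU)


/-- Let `u : ℝⁿ → ℝᵐ` be `1`-Lipschitz and let `𝒮` assign to each
point `x` at which `u` is differentiable the (unique) leaf of `u` containing `x`, and to
each point of the non-differentiability set `N(u)` the singleton `{x}`.  Then for every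
compact `K ⊆ ℝⁿ` the set `{x : 𝒮(x) ∩ K ≠ ∅}` is Borel, and consequently the same holds
with `K` replaced by any open set `U ⊆ ℝⁿ`. -/
theorem stmt_19 {n m : ℕ} (u : EuclideanSpace ℝ (Fin n) → EuclideanSpace ℝ (Fin m))
    (hu : LipschitzWith 1 u)
    (𝒮 : EuclideanSpace ℝ (Fin n) → Set (EuclideanSpace ℝ (Fin n)))
    (h𝒮 : ∀ x, DifferentiableAt ℝ u x → IsLeaf u (𝒮 x) ∧ x ∈ 𝒮 x)
    (h𝒮' : ∀ x, ¬ DifferentiableAt ℝ u x → 𝒮 x = {x}) :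
    (∀ K : Set (EuclideanSpace ℝ (Fin n)), IsCompact K →
      MeasurableSet {x | (𝒮 x ∩ K).Nonempty}) ∧
    (∀ U : Set (EuclideanSpace ℝ (Fin n)), IsOpen U →
      MeasurableSet {x | (𝒮 x ∩ U).Nonempty}) := by
  have hD : MeasurableSet {x | DifferentiableAt ℝ u x} :=
    measurableSet_of_differentiableAt ℝ u
  have key : ∀ K : Set (EuclideanSpace ℝ (Fin n)), IsCompact K →
      MeasurableSet {x | (𝒮 x ∩ K).Nonempty} := by
    intro K hK
    have hset : {x | (𝒮 x ∩ K).Nonempty} =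
        ({x | DifferentiableAt ℝ u x} ∩ {x | ∃ y ∈ K, ‖u y - u x‖ = ‖y - x‖}) ∪
        ({x | DifferentiableAt ℝ u x}ᶜ ∩ K) := by
      ext x
      by_cases hx : DifferentiableAt ℝ u x
      · obtain ⟨hleaf, hmem⟩ := h𝒮 x hx
        have hSx := leaf_eq hu hx hleaf hmem
        simp only [Set.mem_setOf_eq, Set.mem_union, Set.mem_inter_iff, Set.mem_compl_iff]
        constructor
        · rintro ⟨y, hy𝒮, hyK⟩
          rw [hSx] at hy𝒮
          exact Or.inl ⟨hx, y, hyK, hy𝒮⟩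
        · rintro (⟨_, y, hyK, hy⟩ | ⟨hc, _⟩)
          · exact ⟨y, by rw [hSx]; exact hy, hyK⟩
          · exact absurd hx hc
      · simp only [Set.mem_setOf_eq, h𝒮' x hx, Set.mem_union, Set.mem_inter_iff, Set.mem_compl_iff,
          Set.singleton_inter_nonempty]
        constructor
        · intro hxK
          exact Or.inr ⟨hx, hxK⟩
        · rintro (⟨hc, _⟩ | ⟨_, hxK⟩)
          · exact absurd hc hx
          · exact hxK
    rw [hset]
    exact (hD.inter (AK_closed hu hK).measurableSet).union
      (hD.compl.inter hK.isClosed.measurableSet)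
  refine ⟨key, ?_⟩
  intro U hU
  obtain ⟨K, hKc, hUeq⟩ := open_eq_iUnion_compact hU
  have hun : {x | (𝒮 x ∩ U).Nonempty} = ⋃ k, {x | (𝒮 x ∩ K k).Nonempty} := by
    ext x
    simp only [Set.mem_setOf_eq, Set.mem_iUnion]
    constructor
    · rintro ⟨y, hy, hyU⟩
      rw [hUeq] at hyU
      obtain ⟨k, hk⟩ := Set.mem_iUnion.mp hyU
      exact ⟨k, y, hy, hk⟩
    · rintro ⟨k, y, hy, hyK⟩
      exact ⟨y, hy, by rw [hUeq]; exact Set.mem_iUnion.mpr ⟨k, hyK⟩⟩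
  rw [hun]
  exact MeasurableSet.iUnion fun k => key _ (hKc k)
end
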